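/- arXiv:2204.06710 — 4 statements merged into one kernel-verified Lean document; each statement's English description precedes it below -/
import Mathlib

section
/- For every integer n ≥ 1, the function φ₀ satisfies the ordinary differential equation ρ φ₀''(ρ) + (n−1) φ₀'(ρ) = ρ φ₀(ρ) for every ρ ∈ ℝ; in particular φ₀''(ρ) + ((n−1)/ρ) φ₀'(ρ) = φ₀(ρ) for every ρ ≠ 0. -/
open Real Filter

noncomputable def b (n : ℕ) (j : ℕ) : ℝ :=
  ∏ ℓ ∈ Finset.Icc 1 j, 1 / (2 * (ℓ : ℝ) * ((n : ℝ) + 2 * ((ℓ : ℝ) - 1)))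

noncomputable def phi0 (n : ℕ) (ρ : ℝ) : ℝ := ∑' j : ℕ, b n j * ρ ^ (2 * j)

noncomputable def phi1 (n : ℕ) (x : ℝ) : ℝ :=
  ∑' j : ℕ, b n j * ((2 * j : ℕ) * x ^ (2 * j - 1))

noncomputable def phi2 (n : ℕ) (x : ℝ) : ℝ :=
  ∑' j : ℕ, b n j * (2 * j : ℕ) * ((2 * j - 1 : ℕ) * x ^ (2 * j - 2))

lemma b_zero (n : ℕ) : b n 0 = 1 := by simp [b]

lemma b_succ (n j : ℕ) :
    b n (j + 1) = b n j * (1 / (2 * ((j : ℝ) + 1) * ((n : ℝ) + 2 * (j : ℝ)))) := by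
  unfold b
  rw [Finset.prod_Icc_succ_top (by omega)]
  push_cast
  ring

lemma b_pos {n : ℕ} (hn : 1 ≤ n) (j : ℕ) : 0 < b n j := by
  unfold b
  apply Finset.prod_pos
  intro ℓ hℓ
  simp only [Finset.mem_Icc] at hℓ
  have h1 : (1 : ℝ) ≤ (ℓ : ℝ) := by exact_mod_cast hℓ.1
  have h2 : (1 : ℝ) ≤ (n : ℝ) := by exact_mod_cast hn
  have : (0 : ℝ) < (n : ℝ) + 2 * ((ℓ : ℝ) - 1) := by nlinarith
  positivity

lemma b_le {n : ℕ} (hn : 1 ≤ n) (j : ℕ) : b n j ≤ (1 / 2) ^ j / (Nat.factorial j : ℝ) := by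
  induction j with
  | zero => simp [b_zero]
  | succ j ih =>
    rw [b_succ]
    have h2 : (1 : ℝ) ≤ (n : ℝ) := by exact_mod_cast hn
    have hj : (0 : ℝ) ≤ (j : ℝ) := Nat.cast_nonneg j
    have hden : (2 : ℝ) * ((j : ℝ) + 1) ≤ 2 * ((j : ℝ) + 1) * ((n : ℝ) + 2 * j) := by
      nlinarith
    have hpos : (0 : ℝ) < 2 * ((j : ℝ) + 1) := by positivity
    have h1 : 1 / (2 * ((j : ℝ) + 1) * ((n : ℝ) + 2 * j)) ≤ 1 / (2 * ((j : ℝ) + 1)) :=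
      one_div_le_one_div_of_le hpos hden
    have hb := (b_pos hn j).le
    calc b n j * (1 / (2 * ((j : ℝ) + 1) * ((n : ℝ) + 2 * j)))
        ≤ ((1 / 2) ^ j / (Nat.factorial j : ℝ)) * (1 / (2 * ((j : ℝ) + 1))) := by
          apply mul_le_mul ih h1 (by positivity) (by positivity)
      _ = (1 / 2) ^ (j + 1) / (Nat.factorial (j+1) : ℝ) := by
          rw [Nat.factorial_succ]
          push_cast
          have : (Nat.factorial j : ℝ) ≠ 0 := by
            exact_mod_cast (Nat.factorial_pos j).ne'
          field_simp
          ring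

lemma b_key {n : ℕ} (hn : 1 ≤ n) (j : ℕ) :
    b n (j + 1) * (2 * ((j : ℝ) + 1) * ((n : ℝ) + 2 * (j : ℝ))) = b n j := by
  have h2 : (1 : ℝ) ≤ (n : ℝ) := by exact_mod_cast hn
  have hj : (0 : ℝ) ≤ (j : ℝ) := Nat.cast_nonneg j
  have hD : (2 * ((j : ℝ) + 1) * ((n : ℝ) + 2 * (j : ℝ))) ≠ 0 := by nlinarith
  rw [b_succ]
  field_simp

/-- master summability lemma -/
lemma summable_main {n : ℕ} (hn : 1 ≤ n) (c : ℕ → ℝ) (A : ℝ) (hA : 0 ≤ A)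
    (hc : ∀ j, |c j| ≤ 4 * 4 ^ j * A ^ j) :
    Summable (fun j : ℕ => b n j * c j) := by
  apply Summable.of_norm_bounded (g := fun j : ℕ => 4 * ((2 * A) ^ j / (Nat.factorial j : ℝ)))
    ((Real.summable_pow_div_factorial (2 * A)).mul_left 4)
  intro j
  have hb := b_pos hn j
  have hble := b_le hn j
  have hfac : (0 : ℝ) < (Nat.factorial j : ℝ) := by exact_mod_cast Nat.factorial_pos j
  calc ‖b n j * c j‖ = b n j * |c j| := by
        rw [norm_mul, Real.norm_eq_abs, Real.norm_eq_abs, abs_of_pos hb]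
    _ ≤ ((1 / 2) ^ j / (Nat.factorial j : ℝ)) * (4 * 4 ^ j * A ^ j) := by
        apply mul_le_mul hble (hc j) (abs_nonneg _) (by positivity)
    _ = 4 * ((2 * A) ^ j / (Nat.factorial j : ℝ)) := by
        have h4 : (4:ℝ)^j = 2^j * 2^j := by rw [← mul_pow]; norm_num
        rw [mul_pow, h4]
        have h5 : ((1:ℝ)/2)^j = 1/2^j := by rw [div_pow]; norm_num
        rw [h5]
        field_simp

lemma pow_le_aux {x M : ℝ} (hx : |x| ≤ M) (hM : 1 ≤ M) (k j : ℕ) (hk : k ≤ 2 * j) :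
    |x| ^ k ≤ (M ^ 2) ^ j := by
  calc |x| ^ k ≤ M ^ k := pow_le_pow_left₀ (abs_nonneg x) hx k
    _ ≤ M ^ (2 * j) := pow_le_pow_right₀ hM hk
    _ = (M ^ 2) ^ j := by rw [← pow_mul]

lemma two_mul_le_pow (j : ℕ) : (2 * j : ℕ) ≤ 2 * 2 ^ j :=
  Nat.mul_le_mul_left 2 (Nat.lt_two_pow_self (n := j)).le

/-- bound for the coefficients appearing in derivatives -/
lemma coeff_bound {x M : ℝ} (hx : |x| ≤ M) (hM : 1 ≤ M) (j : ℕ) :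
    |((2 * j : ℕ) : ℝ) * x ^ (2 * j - 1)| ≤ 4 * 4 ^ j * (M ^ 2) ^ j := by
  have h1 : |x| ^ (2 * j - 1) ≤ (M ^ 2) ^ j := pow_le_aux hx hM _ j (by omega)
  have h2 : ((2 * j : ℕ) : ℝ) ≤ 2 * 2 ^ j := by exact_mod_cast two_mul_le_pow j
  have h3 : (0 : ℝ) ≤ ((2 * j : ℕ) : ℝ) := by positivity
  calc |((2 * j : ℕ) : ℝ) * x ^ (2 * j - 1)|
      = ((2 * j : ℕ) : ℝ) * |x| ^ (2 * j - 1) := by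
        rw [abs_mul, abs_pow, abs_of_nonneg h3]
    _ ≤ (2 * 2 ^ j) * (M ^ 2) ^ j := by
        apply mul_le_mul h2 h1 (by positivity) (by positivity)
    _ ≤ 4 * 4 ^ j * (M ^ 2) ^ j := by
        have : (2 : ℝ) * 2 ^ j ≤ 4 * 4 ^ j := by
          have : (2 : ℝ) ^ j ≤ 4 ^ j := pow_le_pow_left₀ (by norm_num) (by norm_num) j
          nlinarith
        nlinarith [pow_nonneg (by positivity : (0:ℝ) ≤ M ^ 2) j]

lemma coeff_bound2 {x M : ℝ} (hx : |x| ≤ M) (hM : 1 ≤ M) (j : ℕ) :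
    |((2 * j : ℕ) : ℝ) * (((2 * j - 1 : ℕ) : ℝ) * x ^ (2 * j - 2))| ≤
      4 * 4 ^ j * (M ^ 2) ^ j := by
  have h1 : |x| ^ (2 * j - 2) ≤ (M ^ 2) ^ j := pow_le_aux hx hM _ j (by omega)
  have h2 : ((2 * j : ℕ) : ℝ) ≤ 2 * 2 ^ j := by exact_mod_cast two_mul_le_pow j
  have h2' : ((2 * j - 1 : ℕ) : ℝ) ≤ 2 * 2 ^ j := by
    have : (2 * j - 1 : ℕ) ≤ 2 * 2 ^ j := le_trans (Nat.sub_le _ _) (two_mul_le_pow j)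
    exact_mod_cast this
  have h3 : (0 : ℝ) ≤ ((2 * j : ℕ) : ℝ) := by positivity
  have h3' : (0 : ℝ) ≤ ((2 * j - 1 : ℕ) : ℝ) := by positivity
  have hMp : (0 : ℝ) ≤ (M ^ 2) ^ j := by positivity
  calc |((2 * j : ℕ) : ℝ) * (((2 * j - 1 : ℕ) : ℝ) * x ^ (2 * j - 2))|
      = ((2 * j : ℕ) : ℝ) * (((2 * j - 1 : ℕ) : ℝ) * |x| ^ (2 * j - 2)) := by
        rw [abs_mul, abs_mul, abs_pow, abs_of_nonneg h3, abs_of_nonneg h3']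
    _ ≤ (2 * 2 ^ j) * ((2 * 2 ^ j) * (M ^ 2) ^ j) := by
        apply mul_le_mul h2 _ (by positivity) (by positivity)
        apply mul_le_mul h2' h1 (by positivity) (by positivity)
    _ = 4 * 4 ^ j * (M ^ 2) ^ j := by
        have : (4 : ℝ) ^ j = 2 ^ j * 2 ^ j := by
          rw [← mul_pow]; norm_num
        rw [this]; ring

lemma summable_S0 {n : ℕ} (hn : 1 ≤ n) (x M : ℝ) (hx : |x| ≤ M) (hM : 1 ≤ M) :
    Summable (fun j : ℕ => b n j * x ^ (2 * j)) := by
  apply summable_main hn _ (M ^ 2) (by positivity)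
  intro j
  have h1 : |x| ^ (2 * j) ≤ (M ^ 2) ^ j := pow_le_aux hx hM _ j (by omega)
  have h4 : (1 : ℝ) ≤ 4 * 4 ^ j := by
    have : (1:ℝ) ≤ 4 ^ j := one_le_pow₀ (by norm_num)
    nlinarith
  calc |x ^ (2 * j)| = |x| ^ (2 * j) := abs_pow x _
    _ ≤ (M ^ 2) ^ j := h1
    _ ≤ 4 * 4 ^ j * (M ^ 2) ^ j := by
        nlinarith [pow_nonneg (by positivity : (0:ℝ) ≤ M ^ 2) j]

lemma summable_S1 {n : ℕ} (hn : 1 ≤ n) (x M : ℝ) (hx : |x| ≤ M) (hM : 1 ≤ M) :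
    Summable (fun j : ℕ => b n j * (((2 * j : ℕ) : ℝ) * x ^ (2 * j - 1))) :=
  summable_main hn _ (M ^ 2) (by positivity) (fun j => coeff_bound hx hM j)

lemma summable_S2 {n : ℕ} (hn : 1 ≤ n) (x M : ℝ) (hx : |x| ≤ M) (hM : 1 ≤ M) :
    Summable (fun j : ℕ =>
      b n j * (((2 * j : ℕ) : ℝ) * (((2 * j - 1 : ℕ) : ℝ) * x ^ (2 * j - 2)))) :=
  summable_main hn _ (M ^ 2) (by positivity) (fun j => coeff_bound2 hx hM j)

lemma hasDerivAt_phi0 {n : ℕ} (hn : 1 ≤ n) (ρ : ℝ) :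
    HasDerivAt (phi0 n) (∑' j : ℕ, b n j * (((2 * j : ℕ) : ℝ) * ρ ^ (2 * j - 1))) ρ := by
  set R : ℝ := |ρ| + 1 with hR
  set M : ℝ := max R 1 with hMdef
  have hM1 : (1 : ℝ) ≤ M := le_max_right _ _
  have hRM : R ≤ M := le_max_left _ _
  have hRpos : 0 < R := by positivity
  have key := hasDerivAt_tsum_of_isPreconnected
    (u := fun j : ℕ => b n j * (4 * 4 ^ j * (M ^ 2) ^ j))
    (g := fun (j : ℕ) (y : ℝ) => b n j * y ^ (2 * j))
    (g' := fun (j : ℕ) (y : ℝ) => b n j * (((2 * j : ℕ) : ℝ) * y ^ (2 * j - 1)))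
    (t := Metric.ball (0 : ℝ) R) (y₀ := ρ) (y := ρ)
    (summable_main hn _ (M ^ 2) (by positivity) (fun j => by
      have : (0:ℝ) ≤ 4 * 4 ^ j * (M ^ 2) ^ j := by positivity
      rw [abs_of_nonneg this]))
    Metric.isOpen_ball (convex_ball (0:ℝ) R).isPreconnected
    (fun j y _ => (hasDerivAt_pow (2 * j) y).const_mul (b n j))
    (fun j y hy => by
      have hyM : |y| ≤ M := by
        have : dist y 0 < R := Metric.mem_ball.mp hy
        rw [Real.dist_eq, sub_zero] at this
        linarith
      have hb := (b_pos hn j).le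
      calc ‖b n j * (((2 * j : ℕ) : ℝ) * y ^ (2 * j - 1))‖
          = b n j * |((2 * j : ℕ) : ℝ) * y ^ (2 * j - 1)| := by
            rw [norm_mul, Real.norm_eq_abs, Real.norm_eq_abs, abs_of_nonneg hb]
        _ ≤ b n j * (4 * 4 ^ j * (M ^ 2) ^ j) :=
            mul_le_mul_of_nonneg_left (coeff_bound hyM hM1 j) hb)
    (by simpa [Real.dist_eq] using Metric.mem_ball.mpr (by
        rw [Real.dist_eq, sub_zero]; linarith : dist ρ (0:ℝ) < R))
    (summable_S0 hn ρ M (by linarith) hM1)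
    (by rw [Metric.mem_ball, Real.dist_eq, sub_zero]; linarith)
  exact key

lemma hasDerivAt_phi1 {n : ℕ} (hn : 1 ≤ n) (ρ : ℝ) :
    HasDerivAt (fun x => ∑' j : ℕ, b n j * (((2 * j : ℕ) : ℝ) * x ^ (2 * j - 1)))
      (∑' j : ℕ, b n j * (((2 * j : ℕ) : ℝ) * (((2 * j - 1 : ℕ) : ℝ) * ρ ^ (2 * j - 2)))) ρ := by
  set R : ℝ := |ρ| + 1 with hR
  set M : ℝ := max R 1 with hMdef
  have hM1 : (1 : ℝ) ≤ M := le_max_right _ _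
  have hRM : R ≤ M := le_max_left _ _
  have hRpos : 0 < R := by positivity
  have hderiv : ∀ (j : ℕ) (y : ℝ),
      HasDerivAt (fun x => b n j * (((2 * j : ℕ) : ℝ) * x ^ (2 * j - 1)))
        (b n j * (((2 * j : ℕ) : ℝ) * (((2 * j - 1 : ℕ) : ℝ) * y ^ (2 * j - 2)))) y := by
    intro j y
    have h := (hasDerivAt_pow (2 * j - 1) y).const_mul (b n j * ((2 * j : ℕ) : ℝ))
    have e : 2 * j - 1 - 1 = 2 * j - 2 := by omega
    rw [e] at h
    have e2 : (fun x => b n j * ((2 * j : ℕ) : ℝ) * x ^ (2 * j - 1)) =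
        (fun x => b n j * (((2 * j : ℕ) : ℝ) * x ^ (2 * j - 1))) := by
      funext x; ring
    rw [e2, mul_assoc] at h
    exact h
  have key := hasDerivAt_tsum_of_isPreconnected
    (u := fun j : ℕ => b n j * (4 * 4 ^ j * (M ^ 2) ^ j))
    (g := fun (j : ℕ) (y : ℝ) => b n j * (((2 * j : ℕ) : ℝ) * y ^ (2 * j - 1)))
    (g' := fun (j : ℕ) (y : ℝ) =>
      b n j * (((2 * j : ℕ) : ℝ) * (((2 * j - 1 : ℕ) : ℝ) * y ^ (2 * j - 2))))
    (t := Metric.ball (0 : ℝ) R) (y₀ := ρ) (y := ρ)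
    (summable_main hn _ (M ^ 2) (by positivity) (fun j => by
      have : (0:ℝ) ≤ 4 * 4 ^ j * (M ^ 2) ^ j := by positivity
      rw [abs_of_nonneg this]))
    Metric.isOpen_ball (convex_ball (0:ℝ) R).isPreconnected
    (fun j y _ => hderiv j y)
    (fun j y hy => by
      have hyM : |y| ≤ M := by
        have : dist y 0 < R := Metric.mem_ball.mp hy
        rw [Real.dist_eq, sub_zero] at this
        linarith
      have hb := (b_pos hn j).le
      calc ‖b n j * (((2 * j : ℕ) : ℝ) * (((2 * j - 1 : ℕ) : ℝ) * y ^ (2 * j - 2)))‖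
          = b n j * |((2 * j : ℕ) : ℝ) * (((2 * j - 1 : ℕ) : ℝ) * y ^ (2 * j - 2))| := by
            rw [norm_mul, Real.norm_eq_abs, Real.norm_eq_abs, abs_of_nonneg hb]
        _ ≤ b n j * (4 * 4 ^ j * (M ^ 2) ^ j) :=
            mul_le_mul_of_nonneg_left (coeff_bound2 hyM hM1 j) hb)
    (by rw [Metric.mem_ball, Real.dist_eq, sub_zero]; linarith)
    (summable_S1 hn ρ M (by linarith) hM1)
    (by rw [Metric.mem_ball, Real.dist_eq, sub_zero]; linarith)
  exact key

lemma deriv_phi0_eq {n : ℕ} (hn : 1 ≤ n) :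
    deriv (phi0 n) = fun x => ∑' j : ℕ, b n j * (((2 * j : ℕ) : ℝ) * x ^ (2 * j - 1)) :=
  funext fun x => (hasDerivAt_phi0 hn x).deriv

lemma ode_key {n : ℕ} (hn : 1 ≤ n) (ρ : ℝ) :
    ρ * (∑' j : ℕ, b n j * (((2 * j : ℕ) : ℝ) * (((2 * j - 1 : ℕ) : ℝ) * ρ ^ (2 * j - 2)))) +
      ((n : ℝ) - 1) * (∑' j : ℕ, b n j * (((2 * j : ℕ) : ℝ) * ρ ^ (2 * j - 1))) =
    ρ * phi0 n ρ := by
  set M : ℝ := max |ρ| 1 with hMdef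
  have hM1 : (1 : ℝ) ≤ M := le_max_right _ _
  have hxM : |ρ| ≤ M := le_max_left _ _
  have S0 := summable_S0 hn ρ M hxM hM1
  have S1 := summable_S1 hn ρ M hxM hM1
  have S2 := summable_S2 hn ρ M hxM hM1
  rw [← tsum_mul_left, ← tsum_mul_left,
    ← Summable.tsum_add (S2.mul_left ρ) (S1.mul_left ((n : ℝ) - 1))]
  have hsum : Summable (fun j : ℕ =>
      ρ * (b n j * (((2 * j : ℕ) : ℝ) * (((2 * j - 1 : ℕ) : ℝ) * ρ ^ (2 * j - 2)))) +
      ((n : ℝ) - 1) * (b n j * (((2 * j : ℕ) : ℝ) * ρ ^ (2 * j - 1)))) :=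
    (S2.mul_left ρ).add (S1.mul_left ((n : ℝ) - 1))
  rw [Summable.tsum_eq_zero_add hsum]
  have h0 : ρ * (b n 0 * (((2 * 0 : ℕ) : ℝ) * (((2 * 0 - 1 : ℕ) : ℝ) * ρ ^ (2 * 0 - 2)))) +
      ((n : ℝ) - 1) * (b n 0 * (((2 * 0 : ℕ) : ℝ) * ρ ^ (2 * 0 - 1))) = 0 := by
    norm_num
  rw [h0, zero_add]
  have hterm : ∀ j : ℕ,
      ρ * (b n (j+1) * (((2 * (j+1) : ℕ) : ℝ) *
          (((2 * (j+1) - 1 : ℕ) : ℝ) * ρ ^ (2 * (j+1) - 2)))) +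
      ((n : ℝ) - 1) * (b n (j+1) * (((2 * (j+1) : ℕ) : ℝ) * ρ ^ (2 * (j+1) - 1))) =
      ρ * (b n j * ρ ^ (2 * j)) := by
    intro j
    have e1 : 2 * (j+1) - 1 = 2 * j + 1 := by omega
    have e2 : 2 * (j+1) - 2 = 2 * j := by omega
    have e3 : 2 * (j+1) = 2 * j + 2 := by omega
    rw [e1, e2, e3]
    have hk := b_key hn j
    rw [← hk]
    push_cast
    ring
  calc (∑' j : ℕ,
        (ρ * (b n (j+1) * (((2 * (j+1) : ℕ) : ℝ) *
            (((2 * (j+1) - 1 : ℕ) : ℝ) * ρ ^ (2 * (j+1) - 2)))) +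
        ((n : ℝ) - 1) * (b n (j+1) * (((2 * (j+1) : ℕ) : ℝ) * ρ ^ (2 * (j+1) - 1)))))
      = ∑' j : ℕ, ρ * (b n j * ρ ^ (2 * j)) := tsum_congr hterm
    _ = ρ * phi0 n ρ := by rw [tsum_mul_left]; rfl

theorem stmt1 (n : ℕ) (hn : 1 ≤ n) :
    (∀ ρ : ℝ,
      ρ * deriv (deriv (phi0 n)) ρ + ((n : ℝ) - 1) * deriv (phi0 n) ρ = ρ * phi0 n ρ) ∧
    (∀ ρ : ℝ, ρ ≠ 0 →
      deriv (deriv (phi0 n)) ρ + ((n : ℝ) - 1) / ρ * deriv (phi0 n) ρ = phi0 n ρ) := by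
  have hd1 : deriv (phi0 n) =
      fun x => ∑' j : ℕ, b n j * (((2 * j : ℕ) : ℝ) * x ^ (2 * j - 1)) := deriv_phi0_eq hn
  have hmain : ∀ ρ : ℝ,
      ρ * deriv (deriv (phi0 n)) ρ + ((n : ℝ) - 1) * deriv (phi0 n) ρ = ρ * phi0 n ρ := by
    intro ρ
    rw [hd1, (hasDerivAt_phi1 hn ρ).deriv]
    exact ode_key hn ρ
  refine ⟨hmain, fun ρ hρ => ?_⟩
  have h := hmain ρ
  field_simp
  linarith [h]
end

section
/- For every integer n ≥ 1, the function Φ(ρ) := φ₀'(ρ)/φ₀(ρ) is an odd function of ρ ∈ ℝ and is strictly increasing on ℝ. -/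
open Real Filter
open scoped Nat

namespace Stmt6Aux

noncomputable def psi1 (n : ℕ) (ρ : ℝ) : ℝ :=
  ∑' j : ℕ, b n j * ((2 * j : ℕ) : ℝ) * ρ ^ (2 * j - 1)

noncomputable def psi2 (n : ℕ) (ρ : ℝ) : ℝ :=
  ∑' j : ℕ, b n j * ((2 * j : ℕ) : ℝ) * ((2 * j - 1 : ℕ) : ℝ) * ρ ^ (2 * j - 2)

lemma b_zero (n : ℕ) : b n 0 = 1 := by simp [b]

lemma b_succ (n : ℕ) (j : ℕ) :
    b n (j + 1) = b n j * (1 / (2 * ((j : ℝ) + 1) * ((n : ℝ) + 2 * (j : ℝ)))) := by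
  rw [b, b, Finset.prod_Icc_succ_top (by omega : 1 ≤ j + 1)]
  push_cast
  rw [show ((j:ℝ) + 1 - 1) = (j:ℝ) from by ring]

lemma b_pos (n : ℕ) (hn : 1 ≤ n) (j : ℕ) : 0 < b n j := by
  rw [b]
  apply Finset.prod_pos
  intro ℓ hℓ
  simp only [Finset.mem_Icc] at hℓ
  have h1 : (1 : ℝ) ≤ (ℓ : ℝ) := by exact_mod_cast hℓ.1
  have h2 : (1 : ℝ) ≤ (n : ℝ) := by exact_mod_cast hn
  have : (0:ℝ) < 2 * (ℓ:ℝ) * ((n:ℝ) + 2 * ((ℓ:ℝ) - 1)) := by nlinarith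
  positivity

lemma b_rec (n : ℕ) (hn : 1 ≤ n) (j : ℕ) :
    b n j = 2 * ((j : ℝ) + 1) * ((n : ℝ) + 2 * (j : ℝ)) * b n (j + 1) := by
  have h2 : (1 : ℝ) ≤ (n : ℝ) := by exact_mod_cast hn
  have hc : (0:ℝ) < 2 * ((j : ℝ) + 1) * ((n : ℝ) + 2 * (j : ℝ)) := by positivity
  rw [b_succ n j]
  field_simp

lemma b_le (n : ℕ) (hn : 1 ≤ n) : ∀ j : ℕ, b n j ≤ 1 / (2 ^ j * (j ! : ℝ)) := by
  intro j
  induction j with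
  | zero => simp [b_zero]
  | succ j ih =>
    have h2 : (1 : ℝ) ≤ (n : ℝ) := by exact_mod_cast hn
    have hfac : (0:ℝ) < (j ! : ℝ) := by exact_mod_cast (Nat.factorial_pos j)
    have hc : (0:ℝ) < 2 * ((j : ℝ) + 1) * ((n : ℝ) + 2 * (j : ℝ)) := by positivity
    rw [b_succ n j]
    have h1 : 1 / (2 * ((j : ℝ) + 1) * ((n : ℝ) + 2 * (j : ℝ))) ≤ 1 / (2 * ((j:ℝ) + 1)) := by
      apply one_div_le_one_div_of_le (by positivity)
      nlinarith
    calc b n j * (1 / (2 * ((j : ℝ) + 1) * ((n : ℝ) + 2 * (j : ℝ))))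
        ≤ (1 / (2 ^ j * (j ! : ℝ))) * (1 / (2 * ((j:ℝ) + 1))) := by
          apply mul_le_mul ih h1 (by positivity) (by positivity)
      _ = 1 / (2 ^ (j+1) * ((j+1)! : ℝ)) := by
          rw [Nat.factorial_succ]
          push_cast
          field_simp
          ring
  
lemma nat_sq_le (j : ℕ) : 2 * j * (2 * j) ≤ 64 ^ j := by
  cases j with
  | zero => norm_num
  | succ j =>
    have h : j + 1 ≤ 2 ^ j := Nat.lt_two_pow_self
    calc 2 * (j+1) * (2 * (j+1)) = 4 * ((j+1) * (j+1)) := by ring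
      _ ≤ 4 * (2 ^ j * 2 ^ j) := by
          exact Nat.mul_le_mul_left 4 (Nat.mul_le_mul h h)
      _ = 2 ^ (2 * j + 2) := by ring
      _ ≤ 2 ^ (6 * (j + 1)) := Nat.pow_le_pow_right (by norm_num) (by omega)
      _ = 64 ^ (j + 1) := by
          rw [pow_mul]
          norm_num

lemma coef1_le (j : ℕ) : ((2 * j : ℕ) : ℝ) ≤ 64 ^ j := by
  have h : 2 * j ≤ 64 ^ j := by
    cases j with
    | zero => norm_num
    | succ j =>
      refine le_trans ?_ (nat_sq_le (j+1))
      exact Nat.le_mul_of_pos_right _ (by omega)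
  calc ((2 * j : ℕ) : ℝ) ≤ ((64 ^ j : ℕ) : ℝ) := by exact_mod_cast h
    _ = 64 ^ j := by push_cast; ring

lemma coef2_le (j : ℕ) : ((2 * j : ℕ) : ℝ) * ((2 * j - 1 : ℕ) : ℝ) ≤ 64 ^ j := by
  have h : 2 * j * (2 * j - 1) ≤ 64 ^ j :=
    le_trans (Nat.mul_le_mul_left _ (Nat.sub_le _ _)) (nat_sq_le j)
  calc ((2 * j : ℕ) : ℝ) * ((2 * j - 1 : ℕ) : ℝ) = ((2 * j * (2 * j - 1) : ℕ) : ℝ) := by push_cast; ring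
    _ ≤ ((64 ^ j : ℕ) : ℝ) := by exact_mod_cast h
    _ = 64 ^ j := by push_cast; ring

lemma summable_norm_master (n : ℕ) (hn : 1 ≤ n) (x : ℝ) (c : ℕ → ℝ) (e : ℕ → ℕ)
    (hc : ∀ j, |c j| ≤ 64 ^ j * b n j) (he : ∀ j, e j ≤ 2 * j) :
    Summable fun j => ‖c j * x ^ e j‖ := by
  set M := max 1 |x| with hM
  have hM1 : (1 : ℝ) ≤ M := le_max_left _ _
  have hxM : |x| ≤ M := le_max_right _ _
  have key : ∀ j, ‖c j * x ^ e j‖ ≤ (32 * M ^ 2) ^ j / (j ! : ℝ) := by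
    intro j
    have hfac : (0:ℝ) < (j ! : ℝ) := by exact_mod_cast (Nat.factorial_pos j)
    rw [norm_mul, norm_pow, Real.norm_eq_abs, Real.norm_eq_abs]
    have h2 : |x| ^ e j ≤ M ^ (2 * j) := by
      calc |x| ^ e j ≤ M ^ e j := pow_le_pow_left₀ (abs_nonneg x) hxM _
        _ ≤ M ^ (2 * j) := pow_le_pow_right₀ hM1 (he j)
    calc |c j| * |x| ^ e j ≤ (64 ^ j * b n j) * M ^ (2 * j) := by
          apply mul_le_mul (hc j) h2 (by positivity)
            (mul_nonneg (by positivity) (b_pos n hn j).le)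
      _ ≤ (64 ^ j * (1 / (2 ^ j * (j ! : ℝ)))) * M ^ (2 * j) := by
          have hb := b_le n hn j
          have hMp : (0:ℝ) ≤ M ^ (2*j) := by positivity
          have h64 : (0:ℝ) ≤ (64:ℝ) ^ j := by positivity
          nlinarith [mul_le_mul_of_nonneg_left hb h64]
      _ = (32 * M ^ 2) ^ j / (j ! : ℝ) := by
          rw [pow_mul, mul_pow, show (64:ℝ) = 32 * 2 by norm_num, mul_pow]
          field_simp
  exact Summable.of_nonneg_of_le (fun j => norm_nonneg _) key
    ((Real.summable_pow_div_factorial (32 * M ^ 2)))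

lemma summable_master (n : ℕ) (hn : 1 ≤ n) (x : ℝ) (c : ℕ → ℝ) (e : ℕ → ℕ)
    (hc : ∀ j, |c j| ≤ 64 ^ j * b n j) (he : ∀ j, e j ≤ 2 * j) :
    Summable fun j => c j * x ^ e j :=
  (summable_norm_master n hn x c e hc he).of_norm


lemma one_le_64pow (j : ℕ) : (1:ℝ) ≤ 64 ^ j := by
  simpa using pow_le_pow_right₀ (by norm_num : (1:ℝ) ≤ 64) (Nat.zero_le j)

lemma hcA (n : ℕ) (hn : 1 ≤ n) (j : ℕ) : |b n j| ≤ 64 ^ j * b n j := by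
  rw [abs_of_pos (b_pos n hn j)]
  nlinarith [one_le_64pow j, b_pos n hn j]

lemma hcC (n : ℕ) (hn : 1 ≤ n) (j : ℕ) :
    |b n j * ((2 * j : ℕ) : ℝ)| ≤ 64 ^ j * b n j := by
  rw [abs_mul, abs_of_pos (b_pos n hn j), Nat.abs_cast]
  nlinarith [coef1_le j, b_pos n hn j, Nat.cast_nonneg (α := ℝ) (2 * j)]

lemma hcD (n : ℕ) (hn : 1 ≤ n) (j : ℕ) :
    |b n j * ((2 * j : ℕ) : ℝ) * ((2 * j - 1 : ℕ) : ℝ)| ≤ 64 ^ j * b n j := by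
  rw [abs_mul, abs_mul, abs_of_pos (b_pos n hn j), Nat.abs_cast, Nat.abs_cast]
  have h := coef2_le j
  nlinarith [b_pos n hn j, Nat.cast_nonneg (α := ℝ) (2 * j),
    Nat.cast_nonneg (α := ℝ) (2 * j - 1)]

lemma sumA (n : ℕ) (hn : 1 ≤ n) (x : ℝ) :
    Summable fun j => b n j * x ^ (2 * j) :=
  summable_master n hn x _ (fun j => 2 * j) (hcA n hn) (fun _ => le_rfl)

lemma sumC (n : ℕ) (hn : 1 ≤ n) (x : ℝ) :
    Summable fun j => b n j * ((2 * j : ℕ) : ℝ) * x ^ (2 * j - 1) :=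
  summable_master n hn x _ (fun j => 2 * j - 1) (hcC n hn) (fun j => by show 2 * j - 1 ≤ 2 * j; omega)

lemma sumD (n : ℕ) (hn : 1 ≤ n) (x : ℝ) :
    Summable fun j => b n j * ((2 * j : ℕ) : ℝ) * ((2 * j - 1 : ℕ) : ℝ) * x ^ (2 * j - 2) :=
  summable_master n hn x _ (fun j => 2 * j - 2) (hcD n hn) (fun j => by show 2 * j - 2 ≤ 2 * j; omega)

lemma hasDerivAt_phi0 (n : ℕ) (hn : 1 ≤ n) (x : ℝ) :
    HasDerivAt (phi0 n) (psi1 n x) x := by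
  set R : ℝ := |x| + 1 with hR
  have hxR : x ∈ Set.Ioo (-R) R := by
    constructor
    · have := neg_abs_le x
      simp only [hR]; linarith
    · have := le_abs_self x
      simp only [hR]; linarith
  have h := hasDerivAt_tsum_of_isPreconnected
    (u := fun j => (b n j * ((2 * j : ℕ) : ℝ)) * R ^ (2 * j - 1))
    (g := fun j z => b n j * z ^ (2 * j))
    (g' := fun j y => b n j * (((2 * j : ℕ) : ℝ) * y ^ (2 * j - 1)))
    (summable_master n hn R _ (fun j => 2 * j - 1) (hcC n hn) (fun j => by show 2 * j - 1 ≤ 2 * j; omega))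
    isOpen_Ioo isPreconnected_Ioo
    (fun j y _ => (hasDerivAt_pow (2 * j) y).const_mul (b n j))
    ?_ hxR (sumA n hn x) hxR
  · have he : psi1 n x = ∑' j, b n j * (((2 * j : ℕ) : ℝ) * x ^ (2 * j - 1)) := by
      rw [psi1]; exact tsum_congr fun j => by ring
    rw [he]
    exact h
  · intro j y hy
    have hyR : |y| ≤ R := le_of_lt (abs_lt.mpr ⟨hy.1, hy.2⟩)
    simp only [Real.norm_eq_abs, abs_mul, abs_pow, Nat.abs_cast,
      abs_of_pos (b_pos n hn j)]
    rw [← mul_assoc]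
    exact mul_le_mul_of_nonneg_left (pow_le_pow_left₀ (abs_nonneg y) hyR _)
      (mul_nonneg (b_pos n hn j).le (Nat.cast_nonneg _))

lemma hasDerivAt_psi1 (n : ℕ) (hn : 1 ≤ n) (x : ℝ) :
    HasDerivAt (psi1 n) (psi2 n x) x := by
  set R : ℝ := |x| + 1 with hR
  have hxR : x ∈ Set.Ioo (-R) R := by
    constructor
    · have := neg_abs_le x
      simp only [hR]; linarith
    · have := le_abs_self x
      simp only [hR]; linarith
  have h := hasDerivAt_tsum_of_isPreconnected
    (u := fun j => (b n j * ((2 * j : ℕ) : ℝ) * ((2 * j - 1 : ℕ) : ℝ)) * R ^ (2 * j - 2))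
    (g := fun j z => b n j * ((2 * j : ℕ) : ℝ) * z ^ (2 * j - 1))
    (g' := fun j y => b n j * ((2 * j : ℕ) : ℝ) * (((2 * j - 1 : ℕ) : ℝ) * y ^ (2 * j - 1 - 1)))
    (summable_master n hn R _ (fun j => 2 * j - 2) (hcD n hn) (fun j => by show 2 * j - 2 ≤ 2 * j; omega))
    isOpen_Ioo isPreconnected_Ioo
    (fun j y _ => (hasDerivAt_pow (2 * j - 1) y).const_mul (b n j * ((2 * j : ℕ) : ℝ)))
    ?_ hxR (sumC n hn x) hxR
  · have he : psi2 n x = ∑' j, b n j * ((2 * j : ℕ) : ℝ) *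
        (((2 * j - 1 : ℕ) : ℝ) * x ^ (2 * j - 1 - 1)) := by
      rw [psi2]
      exact tsum_congr fun j => by
        rw [show 2 * j - 1 - 1 = 2 * j - 2 from by omega]; ring
    rw [he]
    exact h
  · intro j y hy
    have hyR : |y| ≤ R := le_of_lt (abs_lt.mpr ⟨hy.1, hy.2⟩)
    simp only [Real.norm_eq_abs, abs_mul, abs_pow, Nat.abs_cast,
      abs_of_pos (b_pos n hn j)]
    rw [show 2 * j - 1 - 1 = 2 * j - 2 from by omega, ← mul_assoc]
    exact mul_le_mul_of_nonneg_left (pow_le_pow_left₀ (abs_nonneg y) hyR _)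
      (mul_nonneg (mul_nonneg (b_pos n hn j).le (Nat.cast_nonneg _)) (Nat.cast_nonneg _))

lemma phi0_pos (n : ℕ) (hn : 1 ≤ n) (x : ℝ) : 0 < phi0 n x := by
  have hs := sumA n hn x
  have h1 : b n 0 * x ^ (2 * 0) ≤ phi0 n x := by
    refine hs.le_tsum 0 (fun j _ => mul_nonneg (b_pos n hn j).le ?_)
    rw [pow_mul]
    positivity
  simp [b_zero] at h1
  linarith

lemma phi0_even (n : ℕ) (x : ℝ) : phi0 n (-x) = phi0 n x := by
  rw [phi0, phi0]
  exact tsum_congr fun j => by rw [Even.neg_pow (even_two_mul j) x]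

lemma psi1_odd (n : ℕ) (x : ℝ) : psi1 n (-x) = -psi1 n x := by
  rw [psi1, psi1, ← tsum_neg]
  apply tsum_congr; intro j
  cases j with
  | zero => simp
  | succ j =>
    rw [Odd.neg_pow ⟨j, by omega⟩ x]
    ring


noncomputable def S (n : ℕ) (m : ℕ) : ℝ :=
  ∑ κ ∈ Finset.range (m + 1),
    b n κ * b n (m - κ) *
      (2 * (κ:ℝ) * (2 * (κ:ℝ) - 1) - 2 * (κ:ℝ) * (2 * ((m - κ : ℕ) : ℝ)))

lemma S_zero (n : ℕ) : S n 0 = 0 := by simp [S]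

lemma S_one (n : ℕ) : S n 1 = 2 * b n 1 := by
  rw [S, Finset.sum_range_succ, Finset.sum_range_succ, Finset.sum_range_zero]
  norm_num [b_zero]
  ring

lemma key_identity (n : ℕ) (hn : 1 ≤ n) (m : ℕ) (hm : 1 ≤ m) :
    (2 * (m:ℝ) + (n:ℝ) - 3) * S n m
      = ((n:ℝ) - 1) * (m:ℝ) * ∑ κ ∈ Finset.range (m + 1), b n κ * b n (m - κ) := by
  have hN1 : (1:ℝ) ≤ (n:ℝ) := by exact_mod_cast hn
  have hM1 : (1:ℝ) ≤ (m:ℝ) := by exact_mod_cast hm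
  have hDpos : (0:ℝ) < 4*(m:ℝ)+2*(n:ℝ)-4 := by linarith
  set G : ℕ → ℝ := fun κ =>
    if κ ≤ m then
      2 * (κ:ℝ) * ((n:ℝ) + 2 * (κ:ℝ) - 2) *
        ((4*(m:ℝ)+2*(n:ℝ)-4) * (2 - 2 * (κ:ℝ)) - ((n:ℝ) - 1)) * b n κ * b n (m - κ)
    else 0 with hG
  have tele : ∀ κ ∈ Finset.range (m + 1),
      (4*(m:ℝ)+2*(n:ℝ)-4) * ((2 * (m:ℝ) + (n:ℝ) - 3) * (b n κ * b n (m - κ) *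
          (2 * (κ:ℝ) * (2 * (κ:ℝ) - 1) - 2 * (κ:ℝ) * (2 * ((m - κ : ℕ) : ℝ))))
        - ((n:ℝ) - 1) * (m:ℝ) * (b n κ * b n (m - κ)))
      = G (κ + 1) - G κ := by
    intro κ hκ
    have hκm : κ ≤ m := Nat.lt_succ_iff.mp (Finset.mem_range.mp hκ)
    rcases eq_or_lt_of_le hκm with hEq | hLt
    · subst hEq
      simp only [hG]
      rw [if_neg (by omega), if_pos le_rfl, Nat.sub_self, b_zero]
      norm_num
      ring
    · have rec1 : b n κ = 2 * ((κ:ℝ) + 1) * ((n:ℝ) + 2 * (κ:ℝ)) * b n (κ + 1) := b_rec n hn κ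
      have rec2 : b n (m - (κ + 1)) = 2 * (((m - (κ+1) : ℕ):ℝ) + 1) *
          ((n:ℝ) + 2 * ((m - (κ+1) : ℕ):ℝ)) * b n (m - κ) := by
        have h := b_rec n hn (m - (κ+1))
        rwa [show m - (κ+1) + 1 = m - κ from by omega] at h
      have c1 : ((m - κ : ℕ):ℝ) = (m:ℝ) - (κ:ℝ) := by
        rw [Nat.cast_sub hκm]
      have c2 : ((m - (κ+1) : ℕ):ℝ) = (m:ℝ) - (κ:ℝ) - 1 := by
        rw [Nat.cast_sub (by omega)]; push_cast; ring
      simp only [hG]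
      rw [if_pos (show κ + 1 ≤ m by omega), if_pos hκm]
      rw [rec1, rec2, c1, c2]
      push_cast
      ring
  have sum_eq : ∑ κ ∈ Finset.range (m + 1),
      (4*(m:ℝ)+2*(n:ℝ)-4) * ((2 * (m:ℝ) + (n:ℝ) - 3) * (b n κ * b n (m - κ) *
          (2 * (κ:ℝ) * (2 * (κ:ℝ) - 1) - 2 * (κ:ℝ) * (2 * ((m - κ : ℕ) : ℝ))))
        - ((n:ℝ) - 1) * (m:ℝ) * (b n κ * b n (m - κ))) = 0 := by
    rw [Finset.sum_congr rfl tele, Finset.sum_range_sub (f := G)]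
    simp only [hG]
    rw [if_neg (by omega), if_pos (Nat.zero_le m)]
    norm_num
  have expand : (4*(m:ℝ)+2*(n:ℝ)-4) * ((2 * (m:ℝ) + (n:ℝ) - 3) * S n m
        - ((n:ℝ) - 1) * (m:ℝ) * ∑ κ ∈ Finset.range (m + 1), b n κ * b n (m - κ))
      = ∑ κ ∈ Finset.range (m + 1),
        (4*(m:ℝ)+2*(n:ℝ)-4) * ((2 * (m:ℝ) + (n:ℝ) - 3) * (b n κ * b n (m - κ) *
            (2 * (κ:ℝ) * (2 * (κ:ℝ) - 1) - 2 * (κ:ℝ) * (2 * ((m - κ : ℕ) : ℝ))))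
          - ((n:ℝ) - 1) * (m:ℝ) * (b n κ * b n (m - κ))) := by
    rw [S, Finset.mul_sum, Finset.mul_sum, ← Finset.sum_sub_distrib, Finset.mul_sum]
  rw [sum_eq] at expand
  have h0 : (2 * (m:ℝ) + (n:ℝ) - 3) * S n m
      - ((n:ℝ) - 1) * (m:ℝ) * ∑ κ ∈ Finset.range (m + 1), b n κ * b n (m - κ) = 0 := by
    rcases mul_eq_zero.mp expand with h | h
    · linarith
    · exact h
  linarith

lemma S_nonneg (n : ℕ) (hn : 1 ≤ n) (m : ℕ) : 0 ≤ S n m := by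
  match m with
  | 0 => simp [S_zero]
  | 1 =>
    rw [S_one]
    have := b_pos n hn 1
    linarith
  | (m + 2) =>
    have hE : (0:ℝ) ≤ ∑ κ ∈ Finset.range (m + 2 + 1), b n κ * b n (m + 2 - κ) :=
      Finset.sum_nonneg fun κ _ => mul_nonneg (b_pos n hn _).le (b_pos n hn _).le
    have hid := key_identity n hn (m + 2) (by omega)
    have hN1 : (1:ℝ) ≤ (n:ℝ) := by exact_mod_cast hn
    have hM : ((m + 2 : ℕ):ℝ) = (m:ℝ) + 2 := by push_cast; ring
    rw [hM] at hid
    have hMn : (0:ℝ) ≤ (m:ℝ) := Nat.cast_nonneg m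
    nlinarith [hid, hE, mul_nonneg (mul_nonneg (show (0:ℝ) ≤ (n:ℝ) - 1 by linarith)
      (show (0:ℝ) ≤ (m:ℝ) + 2 by linarith)) hE]

lemma term_eq (n : ℕ) (x : ℝ) (m κ : ℕ) (hκ : κ ≤ m) :
    (b n κ * ((2*κ:ℕ):ℝ) * ((2*κ-1:ℕ):ℝ) * x ^ (2*κ-2)) * (b n (m-κ) * x ^ (2*(m-κ)))
      - (b n κ * ((2*κ:ℕ):ℝ) * x ^ (2*κ-1)) *
          (b n (m-κ) * ((2*(m-κ):ℕ):ℝ) * x ^ (2*(m-κ)-1))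
    = x ^ (2*m-2) * (b n κ * b n (m-κ) *
        (2*(κ:ℝ)*(2*(κ:ℝ)-1) - 2*(κ:ℝ)*(2*((m-κ:ℕ):ℝ)))) := by
  rcases Nat.eq_zero_or_pos κ with h0 | hpos
  · subst h0
    norm_num
  · have hc1 : ((2*κ-1:ℕ):ℝ) = 2*(κ:ℝ)-1 := by
      rw [Nat.cast_sub (by omega)]; push_cast; ring
    rcases Nat.eq_zero_or_pos (m - κ) with hl0 | hlpos
    · have hκm : κ = m := by omega
      subst hκm
      rw [Nat.sub_self]
      simp only [Nat.mul_zero, Nat.cast_zero, b_zero, pow_zero]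
      rw [hc1]
      push_cast
      ring
    · have e1 : x ^ (2*κ-2) * x ^ (2*(m-κ)) = x ^ (2*m-2) := by
        rw [← pow_add]; congr 1; omega
      have e2 : x ^ (2*κ-1) * x ^ (2*(m-κ)-1) = x ^ (2*m-2) := by
        rw [← pow_add]; congr 1; omega
      rw [hc1]
      push_cast
      linear_combination (b n κ * b n (m-κ) * (2*(κ:ℝ)) * (2*(κ:ℝ)-1)) * e1
        - (b n κ * b n (m-κ) * (2*(κ:ℝ)) * (2*((m-κ:ℕ):ℝ))) * e2

lemma W_pos (n : ℕ) (hn : 1 ≤ n) (x : ℝ) :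
    0 < psi2 n x * phi0 n x - psi1 n x * psi1 n x := by
  have hA := summable_norm_master n hn x _ (fun j => 2*j) (hcA n hn) (fun _ => le_rfl)
  have hC := summable_norm_master n hn x _ (fun j => 2*j-1) (hcC n hn)
    (fun j => by show 2*j-1 ≤ 2*j; omega)
  have hD := summable_norm_master n hn x _ (fun j => 2*j-2) (hcD n hn)
    (fun j => by show 2*j-2 ≤ 2*j; omega)
  have h1 : psi2 n x * phi0 n x = ∑' m, ∑ kl ∈ Finset.HasAntidiagonal.antidiagonal m,
      (b n kl.1 * ((2*kl.1:ℕ):ℝ) * ((2*kl.1-1:ℕ):ℝ) * x ^ (2*kl.1-2)) *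
        (b n kl.2 * x ^ (2*kl.2)) := by
    rw [psi2, phi0]
    exact tsum_mul_tsum_eq_tsum_sum_antidiagonal_of_summable_norm hD hA
  have h2 : psi1 n x * psi1 n x = ∑' m, ∑ kl ∈ Finset.HasAntidiagonal.antidiagonal m,
      (b n kl.1 * ((2*kl.1:ℕ):ℝ) * x ^ (2*kl.1-1)) *
        (b n kl.2 * ((2*kl.2:ℕ):ℝ) * x ^ (2*kl.2-1)) := by
    rw [psi1]
    exact tsum_mul_tsum_eq_tsum_sum_antidiagonal_of_summable_norm hC hC
  have hsP := (summable_norm_sum_mul_antidiagonal_of_summable_norm hD hA).of_norm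
  have hsQ := (summable_norm_sum_mul_antidiagonal_of_summable_norm hC hC).of_norm
  have hterm : ∀ m : ℕ,
      (∑ kl ∈ Finset.HasAntidiagonal.antidiagonal m,
        (b n kl.1 * ((2*kl.1:ℕ):ℝ) * ((2*kl.1-1:ℕ):ℝ) * x ^ (2*kl.1-2)) *
          (b n kl.2 * x ^ (2*kl.2)))
      - (∑ kl ∈ Finset.HasAntidiagonal.antidiagonal m,
        (b n kl.1 * ((2*kl.1:ℕ):ℝ) * x ^ (2*kl.1-1)) *
          (b n kl.2 * ((2*kl.2:ℕ):ℝ) * x ^ (2*kl.2-1)))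
      = x ^ (2*m-2) * S n m := by
    intro m
    rw [Finset.Nat.sum_antidiagonal_eq_sum_range_succ_mk,
      Finset.Nat.sum_antidiagonal_eq_sum_range_succ_mk,
      ← Finset.sum_sub_distrib, S, Finset.mul_sum]
    apply Finset.sum_congr rfl
    intro κ hκ
    exact term_eq n x m κ (Nat.lt_succ_iff.mp (Finset.mem_range.mp hκ))
  have h3 : psi2 n x * phi0 n x - psi1 n x * psi1 n x = ∑' m, x ^ (2*m-2) * S n m := by
    rw [h1, h2, ← hsP.tsum_sub hsQ]
    exact tsum_congr hterm
  rw [h3]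
  have hsum : Summable (fun m => x ^ (2*m-2) * S n m) :=
    Summable.congr (hsP.sub hsQ) hterm
  have hle : x ^ (2*1-2) * S n 1 ≤ ∑' m, x ^ (2*m-2) * S n m := by
    refine hsum.le_tsum 1 (fun j _ => ?_)
    exact mul_nonneg (Even.pow_nonneg ⟨j-1, by omega⟩ x) (S_nonneg n hn j)
  have heq : x ^ (2*1-2) * S n 1 = 2 * b n 1 := by
    norm_num [S_one]
  have hb1 := b_pos n hn 1
  rw [heq] at hle
  linarith

end Stmt6Aux

theorem stmt6 (n : ℕ) (hn : 1 ≤ n) :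
    (∀ ρ : ℝ, deriv (phi0 n) (-ρ) / phi0 n (-ρ) = -(deriv (phi0 n) ρ / phi0 n ρ)) ∧
    StrictMono (fun ρ : ℝ => deriv (phi0 n) ρ / phi0 n ρ) := by
  have hder : deriv (phi0 n) = Stmt6Aux.psi1 n :=
    funext fun x => (Stmt6Aux.hasDerivAt_phi0 n hn x).deriv
  constructor
  · intro ρ
    rw [hder, Stmt6Aux.psi1_odd, Stmt6Aux.phi0_even, neg_div]
  · have hfun : (fun ρ : ℝ => deriv (phi0 n) ρ / phi0 n ρ)
        = fun ρ => Stmt6Aux.psi1 n ρ / phi0 n ρ := by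
      funext ρ; rw [hder]
    rw [hfun]
    apply strictMono_of_deriv_pos
    intro x
    have hphi := Stmt6Aux.phi0_pos n hn x
    have hd : HasDerivAt (fun ρ => Stmt6Aux.psi1 n ρ / phi0 n ρ)
        ((Stmt6Aux.psi2 n x * phi0 n x - Stmt6Aux.psi1 n x * Stmt6Aux.psi1 n x)
          / (phi0 n x) ^ 2) x :=
      (Stmt6Aux.hasDerivAt_psi1 n hn x).div (Stmt6Aux.hasDerivAt_phi0 n hn x) (ne_of_gt hphi)
    rw [hd.deriv]
    exact div_pos (Stmt6Aux.W_pos n hn x) (pow_pos hphi 2)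
end

section
/- For every integer n ≥ 1, the function Ψ defined by Ψ(ρ) := φ₀'(ρ)/(ρ φ₀(ρ)) for ρ ≠ 0 and Ψ(0) := 1/n is even, continuous, strictly decreasing on [0, ∞), and satisfies Ψ(ρ) < 1/n for every ρ > 0; in particular Ψ is bounded above by 1/n. -/
open Real Filter

/-- `Ψ(ρ) = φ₀'(ρ)/(ρ φ₀(ρ))` for `ρ ≠ 0`, extended by `Ψ(0) = 1/n`. -/
noncomputable def Psi (n : ℕ) (ρ : ℝ) : ℝ :=
  if ρ = 0 then 1 / (n : ℝ) else deriv (phi0 n) ρ / (ρ * phi0 n ρ)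

namespace Stmt10Aux

noncomputable def pS (c : ℕ → ℝ) (x : ℝ) : ℝ := ∑' j : ℕ, c j * x ^ j

def shiftc (c : ℕ → ℝ) : ℕ → ℝ := fun j => ((j : ℝ) + 1) * c (j + 1)

def Ent (c : ℕ → ℝ) : Prop := ∀ j, |c j| ≤ 1 / (j.factorial : ℝ)

lemma summable_j_pow_fact (r : ℝ) :
    Summable (fun j : ℕ => (j : ℝ) * r ^ j / (j.factorial : ℝ)) := by
  rw [← summable_nat_add_iff 1]
  have h : (fun j : ℕ => ((j + 1 : ℕ) : ℝ) * r ^ (j + 1) / ((j + 1).factorial : ℝ))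
      = fun j : ℕ => r * (r ^ j / (j.factorial : ℝ)) := by
    funext j
    have h0 : ((j.factorial : ℝ)) ≠ 0 := Nat.cast_ne_zero.mpr j.factorial_ne_zero
    rw [Nat.factorial_succ]
    push_cast
    field_simp
    ring
  rw [h]
  exact (Real.summable_pow_div_factorial r).mul_left r

lemma ent_bound {c : ℕ → ℝ} (h : Ent c) (y : ℝ) (j : ℕ) :
    ‖c j * y ^ j‖ ≤ |y| ^ j / (j.factorial : ℝ) := by
  rw [norm_mul, norm_pow, Real.norm_eq_abs, Real.norm_eq_abs]
  calc |c j| * |y| ^ j ≤ (1 / (j.factorial : ℝ)) * |y| ^ j := by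
        gcongr; exact h j
    _ = |y| ^ j / (j.factorial : ℝ) := by ring

lemma ent_summable_norm {c : ℕ → ℝ} (h : Ent c) (y : ℝ) :
    Summable (fun j : ℕ => ‖c j * y ^ j‖) := by
  refine Summable.of_nonneg_of_le (fun j => norm_nonneg _) (ent_bound h y)
    ((Real.summable_pow_div_factorial (|y|)))

lemma ent_summable {c : ℕ → ℝ} (h : Ent c) (y : ℝ) :
    Summable (fun j : ℕ => c j * y ^ j) :=
  (ent_summable_norm h y).of_norm

lemma ent_shift {c : ℕ → ℝ} (h : Ent c) : Ent (shiftc c) := by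
  intro j
  have h1 := h (j + 1)
  have hj : (0:ℝ) < (j:ℝ) + 1 := by positivity
  have h0 : ((j.factorial : ℝ)) ≠ 0 := Nat.cast_ne_zero.mpr j.factorial_ne_zero
  calc |shiftc c j| = ((j:ℝ)+1) * |c (j+1)| := by
        rw [shiftc, abs_mul, abs_of_pos hj]
    _ ≤ ((j:ℝ)+1) * (1 / ((j+1).factorial : ℝ)) := by gcongr
    _ = 1 / (j.factorial : ℝ) := by
        rw [Nat.factorial_succ]
        push_cast
        field_simp

lemma hasDerivAt_pS {c : ℕ → ℝ} (h : Ent c) (x : ℝ) :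
    HasDerivAt (pS c) (pS (shiftc c) x) x := by
  set R : ℝ := |x| + 1 with hR
  have hR1 : 1 ≤ R := by have := abs_nonneg x; linarith
  have hR0 : 0 < R := lt_of_lt_of_le one_pos hR1
  have hx : x ∈ Metric.ball (0:ℝ) R := by
    simp only [Metric.mem_ball, dist_zero_right, Real.norm_eq_abs, hR]
    linarith
  set u : ℕ → ℝ := fun j => (j : ℝ) * R ^ j / (j.factorial : ℝ) with hu_def
  have hu : Summable u := summable_j_pow_fact R
  have hbound : ∀ (j : ℕ) (y : ℝ), y ∈ Metric.ball (0:ℝ) R →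
      ‖c j * ((j:ℝ) * y ^ (j - 1))‖ ≤ u j := by
    intro j y hy
    have hyR : |y| ≤ R := by
      simp only [Metric.mem_ball, dist_zero_right, Real.norm_eq_abs] at hy
      exact hy.le
    have hpow : |y| ^ (j-1) ≤ R ^ j :=
      le_trans (pow_le_pow_left₀ (abs_nonneg y) hyR _)
        (pow_le_pow_right₀ hR1 (Nat.sub_le j 1))
    calc ‖c j * ((j:ℝ) * y ^ (j-1))‖ = |c j| * ((j:ℝ) * |y| ^ (j-1)) := by
          rw [norm_mul, norm_mul, norm_pow]
          simp [Real.norm_eq_abs, abs_of_nonneg (Nat.cast_nonneg j : (0:ℝ) ≤ j)]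
      _ ≤ (1 / (j.factorial : ℝ)) * ((j:ℝ) * R ^ j) := by
          have := h j
          gcongr
      _ = u j := by rw [hu_def]; ring
  have hder : ∀ (j : ℕ) (y : ℝ), HasDerivAt (fun y : ℝ => c j * y ^ j)
      (c j * ((j : ℝ) * y ^ (j - 1))) y := fun j y => (hasDerivAt_pow j y).const_mul _
  have key : HasDerivAt (pS c) (∑' j : ℕ, c j * ((j:ℝ) * x ^ (j-1))) x := by
    refine hasDerivAt_of_tendstoUniformlyOn
      (f := fun (t : Finset ℕ) y => ∑ j ∈ t, c j * y ^ j) Metric.isOpen_ball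
      (tendstoUniformlyOn_tsum hu fun j y hy => hbound j y hy) ?_ ?_ hx
    · filter_upwards with N y _
      exact HasDerivAt.fun_sum fun j _ => hder j y
    · intro y _
      exact (ent_summable h y).hasSum
  have hsum : Summable fun j : ℕ => c j * ((j:ℝ) * x ^ (j-1)) := by
    refine Summable.of_norm (Summable.of_nonneg_of_le (fun j => norm_nonneg _)
      (fun j => hbound j x hx) hu)
  have heq : (∑' j : ℕ, c j * ((j:ℝ) * x ^ (j-1))) = pS (shiftc c) x := by
    rw [hsum.tsum_eq_zero_add]
    simp only [Nat.cast_zero, zero_mul, mul_zero, zero_add]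
    refine tsum_congr fun j => ?_
    simp only [shiftc, Nat.add_sub_cancel]
    push_cast
    ring
  rwa [heq] at key

lemma continuous_pS {c : ℕ → ℝ} (h : Ent c) : Continuous (pS c) :=
  continuous_iff_continuousAt.2 fun x => (hasDerivAt_pS h x).continuousAt

variable (n : ℕ)

lemma b_zero : b n 0 = 1 := by simp [b]

lemma b_succ (j : ℕ) :
    b n (j+1) = b n j * (1 / (2 * ((j:ℝ)+1) * ((n:ℝ) + 2 * j))) := by
  rw [b, b, Finset.prod_Icc_succ_top (Nat.le_add_left 1 j)]
  push_cast
  ring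

lemma b_pos (hn : 1 ≤ n) (j : ℕ) : 0 < b n j := by
  refine Finset.prod_pos fun ℓ hℓ => ?_
  have h1 : 1 ≤ ℓ := (Finset.mem_Icc.mp hℓ).1
  have hℓ1 : (1:ℝ) ≤ (ℓ:ℝ) := by exact_mod_cast h1
  have hn1 : (1:ℝ) ≤ (n:ℝ) := by exact_mod_cast hn
  have hpos : (0:ℝ) < 2 * ℓ * ((n:ℝ) + 2*((ℓ:ℝ)-1)) := by nlinarith
  exact div_pos one_pos hpos

lemma b_le (hn : 1 ≤ n) (j : ℕ) : b n j ≤ 1 / (j.factorial : ℝ) := by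
  have h2 : (1 : ℝ) / (j.factorial : ℝ) = ∏ ℓ ∈ Finset.Icc 1 j, 1/(ℓ:ℝ) := by
    rw [Finset.prod_div_distrib, Finset.prod_const_one]
    congr 1
    rw [← Nat.cast_prod]
    congr 1
    rw [← Finset.Ico_add_one_right_eq_Icc]
    exact (Finset.prod_Ico_id_eq_factorial j).symm
  rw [b, h2]
  refine Finset.prod_le_prod (fun ℓ hℓ => ?_) (fun ℓ hℓ => ?_)
  · have h1 : 1 ≤ ℓ := (Finset.mem_Icc.mp hℓ).1
    have hℓ1 : (1:ℝ) ≤ (ℓ:ℝ) := by exact_mod_cast h1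
    have hn1 : (1:ℝ) ≤ (n:ℝ) := by exact_mod_cast hn
    have hpos : (0:ℝ) < 2 * ℓ * ((n:ℝ) + 2*((ℓ:ℝ)-1)) := by nlinarith
    positivity
  · have h1 : 1 ≤ ℓ := (Finset.mem_Icc.mp hℓ).1
    have hℓ1 : (1:ℝ) ≤ (ℓ:ℝ) := by exact_mod_cast h1
    have hn1 : (1:ℝ) ≤ (n:ℝ) := by exact_mod_cast hn
    have hℓ0 : (0:ℝ) < (ℓ:ℝ) := by linarith
    apply one_div_le_one_div_of_le hℓ0
    nlinarith


noncomputable def cc (n : ℕ) : ℕ → ℝ := fun j => b n j / ((n:ℝ) + 2*j)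

variable {n : ℕ}

lemma nd_pos (hn : 1 ≤ n) (j : ℕ) : (0:ℝ) < (n:ℝ) + 2*j := by
  have hn1 : (1:ℝ) ≤ (n:ℝ) := by exact_mod_cast hn
  have : (0:ℝ) ≤ (j:ℝ) := Nat.cast_nonneg j
  linarith

lemma cc_pos (hn : 1 ≤ n) (j : ℕ) : 0 < cc n j :=
  div_pos (b_pos n hn j) (nd_pos hn j)

lemma ent_b (hn : 1 ≤ n) : Ent (b n) := fun j => by
  rw [abs_of_pos (b_pos n hn j)]; exact b_le n hn j

lemma ent_cc (hn : 1 ≤ n) : Ent (cc n) := by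
  intro j
  rw [abs_of_pos (cc_pos hn j)]
  refine le_trans ?_ (b_le n hn j)
  rw [cc]
  exact div_le_self (b_pos n hn j).le (by
    have hn1 : (1:ℝ) ≤ (n:ℝ) := by exact_mod_cast hn
    have : (0:ℝ) ≤ (j:ℝ) := Nat.cast_nonneg j
    linarith)

lemma shift_b (hn : 1 ≤ n) (j : ℕ) : shiftc (b n) j = cc n j / 2 := by
  have hd := nd_pos hn j
  have hj : (0:ℝ) < (j:ℝ) + 1 := by positivity
  rw [shiftc, b_succ, cc]
  field_simp

lemma pS_shift_b (hn : 1 ≤ n) (x : ℝ) :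
    pS (shiftc (b n)) x = pS (cc n) x / 2 := by
  rw [pS, pS, ← tsum_div_const]
  exact tsum_congr fun j => by rw [shift_b hn]; ring

lemma phi0_eq (ρ : ℝ) : phi0 n ρ = pS (b n) (ρ^2) :=
  tsum_congr fun j => by rw [pow_mul]

lemma hasDerivAt_phi0 (hn : 1 ≤ n) (ρ : ℝ) :
    HasDerivAt (phi0 n) (ρ * pS (cc n) (ρ^2)) ρ := by
  have h1 := hasDerivAt_pS (ent_b hn) (ρ^2)
  have h2 : HasDerivAt (fun y : ℝ => y^2) (2*ρ) ρ := by
    simpa using hasDerivAt_pow 2 ρ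
  have h3 : HasDerivAt (fun y : ℝ => pS (b n) (y^2))
      (pS (shiftc (b n)) (ρ^2) * (2*ρ)) ρ :=
    HasDerivAt.comp (h := fun y : ℝ => y^2) (h₂ := pS (b n)) ρ h1 h2
  have h4 : phi0 n = fun ρ : ℝ => pS (b n) (ρ^2) := funext phi0_eq
  rw [h4]
  have h5 : pS (shiftc (b n)) (ρ^2) * (2*ρ) = ρ * pS (cc n) (ρ^2) := by
    rw [pS_shift_b hn]; ring
  rw [← h5]
  exact h3

lemma D_pos (hn : 1 ≤ n) {x : ℝ} (hx : 0 ≤ x) : 0 < pS (b n) x := by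
  have hs := ent_summable (ent_b hn) x
  have h0 : b n 0 * x ^ 0 ≤ pS (b n) x :=
    hs.le_tsum 0 (fun j _ => mul_nonneg (b_pos n hn j).le (pow_nonneg hx j))
  rw [b_zero, pow_zero, mul_one] at h0
  linarith

lemma D_zero : pS (b n) 0 = 1 := by
  rw [pS, tsum_eq_single 0 (fun j hj => by rw [zero_pow hj, mul_zero])]
  rw [b_zero, pow_zero, mul_one]

lemma N_zero : pS (cc n) 0 = 1 / (n:ℝ) := by
  rw [pS, tsum_eq_single 0 (fun j hj => by rw [zero_pow hj, mul_zero])]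
  simp [cc, b_zero]

lemma Psi_eq (hn : 1 ≤ n) (ρ : ℝ) :
    Psi n ρ = pS (cc n) (ρ^2) / pS (b n) (ρ^2) := by
  by_cases hρ : ρ = 0
  · subst hρ
    rw [Psi, if_pos rfl]
    norm_num [N_zero, D_zero]
  · rw [Psi, if_neg hρ, (hasDerivAt_phi0 hn ρ).deriv]
    rw [show phi0 n ρ = pS (b n) (ρ^2) from phi0_eq ρ]
    rw [mul_div_mul_left _ _ hρ]

lemma ent_summable_j_norm {c : ℕ → ℝ} (h : Ent c) (x : ℝ) :
    Summable fun j : ℕ => ‖(j:ℝ) * c j * x ^ j‖ := by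
  refine Summable.of_nonneg_of_le (fun _ => norm_nonneg _) (fun j => ?_)
    (summable_j_pow_fact |x|)
  rw [norm_mul, norm_mul, norm_pow, Real.norm_eq_abs, Real.norm_eq_abs, Real.norm_eq_abs]
  rw [abs_of_nonneg (Nat.cast_nonneg j : (0:ℝ) ≤ j)]
  calc (j:ℝ) * |c j| * |x| ^ j ≤ (j:ℝ) * (1 / (j.factorial : ℝ)) * |x| ^ j := by
        gcongr; exact h j
    _ = (j:ℝ) * |x| ^ j / (j.factorial : ℝ) := by ring

lemma ent_summable_j {c : ℕ → ℝ} (h : Ent c) (x : ℝ) :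
    Summable fun j : ℕ => (j:ℝ) * c j * x ^ j :=
  (ent_summable_j_norm h x).of_norm

lemma tsum_j_eq {c : ℕ → ℝ} (h : Ent c) (x : ℝ) :
    ∑' j : ℕ, (j:ℝ) * c j * x ^ j = x * pS (shiftc c) x := by
  rw [(ent_summable_j h x).tsum_eq_zero_add]
  simp only [Nat.cast_zero, zero_mul, zero_add]
  rw [pS, ← tsum_mul_left]
  exact tsum_congr fun j => by rw [shiftc]; push_cast; ring

noncomputable def FF (n : ℕ) (x : ℝ) (z : ℕ × ℕ) : ℝ :=
  cc n z.1 * b n z.2 * ((z.1:ℝ) - (z.2:ℝ)) * x^(z.1+z.2)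

set_option maxHeartbeats 2000000 in
lemma W_neg (hn : 1 ≤ n) {x : ℝ} (hx : 0 < x) :
    pS (shiftc (cc n)) x * pS (b n) x - pS (cc n) x * pS (shiftc (b n)) x < 0 := by
  have hb := ent_b hn
  have hc := ent_cc hn
  have hDs := ent_summable hb x
  have hNs := ent_summable hc x
  have hDn := ent_summable_norm hb x
  have hNn := ent_summable_norm hc x
  have hjD := ent_summable_j hb x
  have hjN := ent_summable_j hc x
  have hjDn := ent_summable_j_norm hb x
  have hjNn := ent_summable_j_norm hc x
  set F : ℕ × ℕ → ℝ := FF n x with hF_def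
  have hSA : Summable (fun z : ℕ × ℕ => ((z.1:ℝ) * cc n z.1 * x^z.1) * (b n z.2 * x^z.2)) :=
    summable_mul_of_summable_norm hjNn hDn
  have hSB : Summable (fun z : ℕ × ℕ => (cc n z.1 * x^z.1) * ((z.2:ℝ) * b n z.2 * x^z.2)) :=
    summable_mul_of_summable_norm hNn hjDn
  have hptF : ∀ z : ℕ × ℕ,
      ((z.1:ℝ) * cc n z.1 * x^z.1) * (b n z.2 * x^z.2)
        - (cc n z.1 * x^z.1) * ((z.2:ℝ) * b n z.2 * x^z.2) = F z := by
    intro z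
    rw [hF_def]
    simp only [FF]
    rw [pow_add]
    ring
  have hF : Summable F := by
    refine Summable.congr (hSA.sub hSB) hptF
  have hkey : x * (pS (shiftc (cc n)) x * pS (b n) x - pS (cc n) x * pS (shiftc (b n)) x)
      = ∑' z : ℕ × ℕ, F z := by
    have hA : (∑' j:ℕ, (j:ℝ) * cc n j * x^j) * pS (b n) x
        = ∑' z : ℕ × ℕ, ((z.1:ℝ) * cc n z.1 * x^z.1) * (b n z.2 * x^z.2) := by
      rw [pS]
      exact hjN.tsum_mul_tsum hDs hSA
    have hB : pS (cc n) x * (∑' j:ℕ, (j:ℝ) * b n j * x^j)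
        = ∑' z : ℕ × ℕ, (cc n z.1 * x^z.1) * ((z.2:ℝ) * b n z.2 * x^z.2) := by
      rw [pS]
      exact hNs.tsum_mul_tsum hjD hSB
    calc x * (pS (shiftc (cc n)) x * pS (b n) x - pS (cc n) x * pS (shiftc (b n)) x)
        = (x * pS (shiftc (cc n)) x) * pS (b n) x
          - pS (cc n) x * (x * pS (shiftc (b n)) x) := by ring
      _ = (∑' j:ℕ, (j:ℝ) * cc n j * x^j) * pS (b n) x
          - pS (cc n) x * (∑' j:ℕ, (j:ℝ) * b n j * x^j) := by
            rw [tsum_j_eq hc, tsum_j_eq hb]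
      _ = ∑' z : ℕ × ℕ, (((z.1:ℝ) * cc n z.1 * x^z.1) * (b n z.2 * x^z.2)
            - (cc n z.1 * x^z.1) * ((z.2:ℝ) * b n z.2 * x^z.2)) := by
            rw [hA, hB, hSA.tsum_sub hSB]
      _ = ∑' z : ℕ × ℕ, F z := tsum_congr hptF
  have hFswap : Summable (fun z : ℕ × ℕ => F z.swap) :=
    (Equiv.prodComm ℕ ℕ).summable_iff.mpr hF
  have hswap : ∑' z : ℕ × ℕ, F z.swap = ∑' z : ℕ × ℕ, F z :=
    Equiv.tsum_eq (Equiv.prodComm ℕ ℕ) F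
  have hGkey : ∀ i j : ℕ, F (i, j) + F (j, i)
      = -(2 * b n i * b n j * ((i:ℝ)-(j:ℝ))^2
          / (((n:ℝ)+2*i) * ((n:ℝ)+2*j)) * x^(i+j)) := by
    intro i j
    have hp := (nd_pos hn i).ne'
    have hq := (nd_pos hn j).ne'
    rw [hF_def]
    simp only [FF, cc]
    rw [Nat.add_comm j i]
    field_simp
    ring
  have hGle : ∀ z : ℕ × ℕ, F z + F z.swap ≤ (fun _ : ℕ × ℕ => (0:ℝ)) z := by
    rintro ⟨i, j⟩
    have h1 := hGkey i j
    simp only [Prod.swap_prod_mk]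
    rw [h1]
    have h2 : 0 ≤ 2 * b n i * b n j * ((i:ℝ)-(j:ℝ))^2
        / (((n:ℝ)+2*i) * ((n:ℝ)+2*j)) * x^(i+j) := by
      have hbi := (b_pos n hn i).le
      have hbj := (b_pos n hn j).le
      have hp := (nd_pos hn i).le
      have hq := (nd_pos hn j).le
      have hxp := (pow_pos hx (i+j)).le
      positivity
    linarith
  have hGlt : F (1, 0) + F ((1:ℕ), (0:ℕ)).swap < (fun _ : ℕ × ℕ => (0:ℝ)) ((1:ℕ), (0:ℕ)) := by
    simp only [Prod.swap_prod_mk]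
    rw [hGkey 1 0]
    have hb1 := b_pos n hn 1
    have hb0 := b_pos n hn 0
    have hp := nd_pos hn 1
    have hq := nd_pos hn 0
    refine neg_lt_zero.mpr ?_
    refine mul_pos (div_pos ?_ (mul_pos hp hq)) (pow_pos hx _)
    have h10 : (((1:ℕ):ℝ) - ((0:ℕ):ℝ))^2 = 1 := by norm_num
    rw [h10, mul_one]
    nlinarith
  have hT2 : (∑' z : ℕ × ℕ, (F z + F z.swap)) < ∑' _ : ℕ × ℕ, (0:ℝ) :=
    (hF.add hFswap).tsum_lt_tsum hGle hGlt summable_zero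
  rw [tsum_zero, hF.tsum_add hFswap, hswap] at hT2
  have hT : ∑' z : ℕ × ℕ, F z < 0 := by linarith
  have hxW : x * (pS (shiftc (cc n)) x * pS (b n) x
      - pS (cc n) x * pS (shiftc (b n)) x) < 0 := by
    rw [hkey]; exact hT
  nlinarith [hxW, hx]

end Stmt10Aux

open Stmt10Aux in
theorem stmt10 (n : ℕ) (hn : 1 ≤ n) :
    (∀ ρ : ℝ, Psi n (-ρ) = Psi n ρ) ∧
    Continuous (Psi n) ∧
    StrictAntiOn (Psi n) (Set.Ici 0) ∧
    (∀ ρ : ℝ, 0 < ρ → Psi n ρ < 1 / (n : ℝ)) := by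
  have hb := ent_b (n := n) hn
  have hc := ent_cc (n := n) hn
  have hPsi : ∀ ρ : ℝ, Psi n ρ = pS (cc n) (ρ^2) / pS (b n) (ρ^2) := Psi_eq hn
  refine ⟨?_, ?_, ?_, ?_⟩
  · intro ρ
    rw [hPsi, hPsi, neg_pow]
    norm_num
  · have h : Psi n = fun ρ : ℝ => pS (cc n) (ρ^2) / pS (b n) (ρ^2) := funext hPsi
    rw [h]
    refine Continuous.div ((continuous_pS hc).comp (continuous_pow 2))
      ((continuous_pS hb).comp (continuous_pow 2)) ?_
    intro ρ
    exact (D_pos hn (sq_nonneg ρ)).ne'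
  · have hg : StrictAntiOn (fun x : ℝ => pS (cc n) x / pS (b n) x) (Set.Ici 0) := by
      refine strictAntiOn_of_deriv_neg (convex_Ici 0) ?_ ?_
      · refine ContinuousOn.div (continuous_pS hc).continuousOn
          (continuous_pS hb).continuousOn ?_
        intro x hx
        exact (D_pos hn hx).ne'
      · intro x hx
        rw [interior_Ici] at hx
        have hD0 := (D_pos hn (le_of_lt hx)).ne'
        have hN := hasDerivAt_pS hc x
        have hD := hasDerivAt_pS hb x
        rw [(hN.fun_div hD hD0).deriv]
        exact div_neg_of_neg_of_pos (W_neg hn hx) (by positivity)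
    intro a ha c hcmem hac
    rw [hPsi, hPsi]
    exact hg (Set.mem_Ici.mpr (sq_nonneg a)) (Set.mem_Ici.mpr (sq_nonneg c))
      (by nlinarith [Set.mem_Ici.mp ha])
  · intro ρ hρ
    have hx : (0:ℝ) < ρ^2 := by positivity
    rw [hPsi]
    have hD := D_pos hn hx.le
    have hnd : ∀ j : ℕ, (0:ℝ) < (n:ℝ) + 2*j := nd_pos hn
    have hn0 : (0:ℝ) < (n:ℝ) := by exact_mod_cast hn
    rw [div_lt_div_iff₀ hD hn0]
    have hle : ∀ j : ℕ, cc n j * (ρ^2)^j * (n:ℝ) ≤ b n j * (ρ^2)^j := by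
      intro j
      have h1 : cc n j * (n:ℝ) ≤ b n j := by
        rw [cc, div_mul_eq_mul_div, div_le_iff₀ (hnd j)]
        have hbj := (b_pos n hn j).le
        have : (0:ℝ) ≤ (j:ℝ) := Nat.cast_nonneg j
        nlinarith
      have h2 : (0:ℝ) ≤ (ρ^2)^j := pow_nonneg hx.le j
      nlinarith
    have hlt1 : cc n 1 * (ρ^2)^1 * (n:ℝ) < b n 1 * (ρ^2)^1 := by
      have h1 : cc n 1 * (n:ℝ) < b n 1 := by
        rw [cc, div_mul_eq_mul_div, div_lt_iff₀ (hnd 1)]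
        have hb1 := b_pos n hn 1
        have hOne : ((1:ℕ):ℝ) = 1 := Nat.cast_one
        nlinarith
      have h2 : (0:ℝ) < (ρ^2)^1 := pow_pos hx 1
      nlinarith
    calc pS (cc n) (ρ^2) * (n:ℝ)
        = ∑' j : ℕ, cc n j * (ρ^2)^j * (n:ℝ) := by
          rw [pS, tsum_mul_right]
      _ < ∑' j : ℕ, b n j * (ρ^2)^j :=
          ((ent_summable hc (ρ^2)).mul_right _).tsum_lt_tsum hle hlt1
            (ent_summable hb (ρ^2))
      _ = 1 * pS (b n) (ρ^2) := by rw [pS, one_mul]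
end

section
/- Let n ≥ 1 be an integer and let φ be a real-valued function that is C² on the closed unit ball of ℝⁿ and satisfies Δφ = 0 in the open unit ball B^n (where Δ is the Euclidean Laplacian, i.e. the sum of the pure second partial derivatives) together with the critical-Robin boundary condition ⟨∇φ(x), x⟩ = φ(x) for every x with |x| = 1. Then φ is linear: there exists a ∈ ℝⁿ such that φ(x) = ⟨a, x⟩ for all x in the closed unit ball. -/
open Real Filter Metric

open scoped RealInnerProductSpace

open Set Topology

/-- The Euclidean Laplacian: the sum of the pure second partial derivatives. -/
noncomputable def lap (n : ℕ) (φ : EuclideanSpace ℝ (Fin n) → ℝ)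
    (x : EuclideanSpace ℝ (Fin n)) : ℝ :=
  ∑ i : Fin n,
    fderiv ℝ (fun y => fderiv ℝ φ y (EuclideanSpace.single i 1)) x
      (EuclideanSpace.single i 1)

theorem deriv2_nonpos_of_isLocalMax {g : ℝ → ℝ} {D : ℝ} (hmax : IsLocalMax g 0)
    (hdiff : ∀ᶠ t in 𝓝 (0:ℝ), DifferentiableAt ℝ g t)
    (hD : HasDerivAt (deriv g) D 0) : D ≤ 0 := by
  by_contra hpos
  push_neg at hpos
  have h0 : deriv g 0 = 0 := hmax.deriv_eq_zero
  have hslope : Tendsto (fun t : ℝ => deriv g t / t) (𝓝[≠] 0) (𝓝 D) :=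
    (hasDerivAt_iff_tendsto_slope.1 hD).congr fun t => by
      simp [slope_def_field, h0]
  have hpos' : ∀ᶠ t in 𝓝[>] (0:ℝ), 0 < deriv g t := by
    have h1 : ∀ᶠ t in 𝓝[≠] (0:ℝ), 0 < deriv g t / t :=
      hslope.eventually (eventually_gt_nhds hpos)
    have h2 : 𝓝[>] (0:ℝ) ≤ 𝓝[≠] (0:ℝ) := nhdsWithin_mono _ fun t ht => ne_of_gt ht
    filter_upwards [h2 h1, self_mem_nhdsWithin] with t ht ht'
    have htpos : (0:ℝ) < t := ht'
    rcases div_pos_iff.mp ht with ⟨h, _⟩ | ⟨_, h⟩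
    · exact h
    · linarith
  -- get δ with: differentiable on ball, local max on ball, deriv>0 on (0,δ)
  obtain ⟨δ1, hδ1, hd1⟩ := Metric.eventually_nhds_iff.mp hdiff
  obtain ⟨δ2, hδ2, hd2⟩ := Metric.eventually_nhds_iff.mp (eventually_nhdsWithin_iff.mp hpos')
  obtain ⟨δ3, hδ3, hd3⟩ := Metric.eventually_nhds_iff.mp hmax
  set δ := min δ1 (min δ2 δ3) / 2 with hδdef
  have hδpos : 0 < δ := by positivity
  have hδ1' : δ < δ1 := by
    have := min_le_left δ1 (min δ2 δ3); simp only [hδdef]; linarith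
  have hδ2' : δ < δ2 := by
    have h := (min_le_right δ1 (min δ2 δ3)).trans (min_le_left δ2 δ3)
    simp only [hδdef]; linarith
  have hδ3' : δ < δ3 := by
    have h := (min_le_right δ1 (min δ2 δ3)).trans (min_le_right δ2 δ3)
    simp only [hδdef]; linarith
  have hmono : StrictMonoOn g (Icc 0 δ) := by
    apply strictMonoOn_of_deriv_pos (convex_Icc 0 δ)
    · apply ContinuousOn.mono (s := Icc 0 δ) ?_ (le_refl _)
      intro t ht
      have : dist t 0 < δ1 := by
        rw [Real.dist_eq, sub_zero, abs_of_nonneg ht.1]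
        exact lt_of_le_of_lt ht.2 hδ1'
      exact ((hd1 this).continuousAt).continuousWithinAt
    · intro t ht
      rw [interior_Icc] at ht
      apply hd2 ?_ ht.1
      rw [Real.dist_eq, sub_zero, abs_of_nonneg ht.1.le]
      exact lt_of_lt_of_le ht.2 hδ2'.le
  have hlt : g 0 < g δ := hmono (by constructor <;> simp [hδpos.le]) (by simp [hδpos.le]) hδpos
  have hle : g δ ≤ g 0 := by
    apply hd3
    rw [Real.dist_eq, sub_zero, abs_of_nonneg hδpos.le]
    exact hδ3'
  linarith

theorem lap_nonpos_of_isLocalMax {n : ℕ} {v : EuclideanSpace ℝ (Fin n) → ℝ}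
    {x₀ : EuclideanSpace ℝ (Fin n)} (hv : ContDiffAt ℝ 2 v x₀)
    (hmax : IsLocalMax v x₀) : lap n v x₀ ≤ 0 := by
  apply Finset.sum_nonpos
  intro i _
  set e : EuclideanSpace ℝ (Fin n) := EuclideanSpace.single i 1 with he
  set L : ℝ → EuclideanSpace ℝ (Fin n) := fun t => x₀ + t • e with hL
  have hL0 : L 0 = x₀ := by simp [hL]
  have hLc : Continuous L := by continuity
  have hLd : ∀ t : ℝ, HasDerivAt L e t := by
    intro t
    simpa [hL] using (hasDerivAt_id t).smul_const e |>.const_add x₀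
  -- v is C² near x₀, hence differentiable near x₀
  have hvy : ∀ᶠ y in 𝓝 x₀, ContDiffAt ℝ 2 v y := hv.eventually (by norm_num)
  have hdv : ∀ᶠ y in 𝓝 x₀, DifferentiableAt ℝ v y :=
    hvy.mono fun y hy => hy.differentiableAt (by norm_num)
  -- the directional derivative function
  set h : EuclideanSpace ℝ (Fin n) → ℝ := fun y => fderiv ℝ v y e with hh
  have hDh : DifferentiableAt ℝ h x₀ := by
    have h1 : ContDiffAt ℝ 1 (fderiv ℝ v) x₀ := hv.fderiv_right (by norm_num)
    exact ((ContinuousLinearMap.apply ℝ ℝ e).differentiableAt).comp x₀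
      (h1.differentiableAt (by norm_num))
  set g : ℝ → ℝ := fun t => v (L t) with hg
  have hgmax : IsLocalMax g 0 := by
    have : Tendsto L (𝓝 0) (𝓝 x₀) := by
      rw [← hL0]; exact hLc.continuousAt
    have h2 := this.eventually hmax
    simpa [IsLocalMax, IsMaxFilter, hg, hL0] using h2
  have hgd : ∀ᶠ t in 𝓝 (0:ℝ), DifferentiableAt ℝ g t ∧ deriv g t = h (L t) := by
    have : Tendsto L (𝓝 0) (𝓝 x₀) := by rw [← hL0]; exact hLc.continuousAt
    filter_upwards [this.eventually hdv] with t ht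
    have : HasDerivAt g (fderiv ℝ v (L t) e) t :=
      (ht.hasFDerivAt).comp_hasDerivAt t (hLd t)
    exact ⟨this.differentiableAt, this.deriv⟩
  have hD2 : HasDerivAt (deriv g) (fderiv ℝ h x₀ e) 0 := by
    have hc : HasDerivAt (fun t => h (L t)) (fderiv ℝ h x₀ e) 0 := by
      have h0 : HasFDerivAt h (fderiv ℝ h x₀) (L 0) := by rw [hL0]; exact hDh.hasFDerivAt
      exact h0.comp_hasDerivAt 0 (hLd 0)
    apply hc.congr_of_eventuallyEq
    filter_upwards [hgd] with t ht using ht.2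
  exact deriv2_nonpos_of_isLocalMax hgmax (hgd.mono fun t ht => ht.1) hD2

theorem lap_congr {n : ℕ} {f g : EuclideanSpace ℝ (Fin n) → ℝ}
    {x : EuclideanSpace ℝ (Fin n)} (h : f =ᶠ[𝓝 x] g) : lap n f x = lap n g x := by
  unfold lap
  congr 1
  ext i
  have h1 : (fun y => fderiv ℝ f y (EuclideanSpace.single i 1)) =ᶠ[𝓝 x]
      (fun y => fderiv ℝ g y (EuclideanSpace.single i 1)) := by
    filter_upwards [h.fderiv (𝕜 := ℝ)] with y hy
    rw [hy]
  rw [h1.fderiv_eq]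

theorem dirDiff {n : ℕ} {v : EuclideanSpace ℝ (Fin n) → ℝ}
    {x : EuclideanSpace ℝ (Fin n)} (hv : ContDiffAt ℝ 2 v x)
    (e : EuclideanSpace ℝ (Fin n)) :
    DifferentiableAt ℝ (fun y => fderiv ℝ v y e) x := by
  have h1 : ContDiffAt ℝ 1 (fderiv ℝ v) x := hv.fderiv_right (by norm_num)
  exact ((ContinuousLinearMap.apply ℝ ℝ e).differentiableAt).comp x
    (h1.differentiableAt (by norm_num))

-- sum of squares
theorem q_hasFDerivAt {n : ℕ} (y : EuclideanSpace ℝ (Fin n)) :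
    HasFDerivAt (fun z : EuclideanSpace ℝ (Fin n) => ∑ i, z i ^ 2)
      (∑ j, (2 * y j) • (EuclideanSpace.proj j : EuclideanSpace ℝ (Fin n) →L[ℝ] ℝ)) y := by
  apply HasFDerivAt.fun_sum
  intro j _
  have h1 : HasFDerivAt (fun z : EuclideanSpace ℝ (Fin n) => z j)
      (EuclideanSpace.proj j : EuclideanSpace ℝ (Fin n) →L[ℝ] ℝ) y :=
    (EuclideanSpace.proj j : EuclideanSpace ℝ (Fin n) →L[ℝ] ℝ).hasFDerivAt
  have h2 := (hasDerivAt_pow 2 (y j)).comp_hasFDerivAt y h1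
  simpa [pow_one, Function.comp_def] using h2

theorem fderiv_q_apply {n : ℕ} (y : EuclideanSpace ℝ (Fin n)) (i : Fin n) :
    fderiv ℝ (fun z : EuclideanSpace ℝ (Fin n) => ∑ i, z i ^ 2) y
      (EuclideanSpace.single i 1) = 2 * y i := by
  rw [(q_hasFDerivAt y).fderiv]
  simp [ContinuousLinearMap.sum_apply, EuclideanSpace.single_apply, Finset.sum_ite_eq]

theorem lap_q {n : ℕ} (x : EuclideanSpace ℝ (Fin n)) :
    lap n (fun z => ∑ i, z i ^ 2) x = 2 * n := by
  unfold lap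
  have : ∀ i : Fin n,
      fderiv ℝ (fun y : EuclideanSpace ℝ (Fin n) =>
        fderiv ℝ (fun z : EuclideanSpace ℝ (Fin n) => ∑ i, z i ^ 2) y
          (EuclideanSpace.single i 1)) x (EuclideanSpace.single i 1) = 2 := by
    intro i
    have h1 : (fun y : EuclideanSpace ℝ (Fin n) =>
        fderiv ℝ (fun z : EuclideanSpace ℝ (Fin n) => ∑ i, z i ^ 2) y
          (EuclideanSpace.single i 1))
        = fun y => ((2:ℝ) • (EuclideanSpace.proj i : EuclideanSpace ℝ (Fin n) →L[ℝ] ℝ)) y := by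
      funext y
      simp only [fderiv_q_apply, ContinuousLinearMap.smul_apply, smul_eq_mul]
      rfl
    rw [h1, ContinuousLinearMap.fderiv]
    simp [EuclideanSpace.single_apply]
  rw [Finset.sum_congr rfl fun i _ => this i]
  simp [mul_comm]



theorem lap_neg {n : ℕ} (F : EuclideanSpace ℝ (Fin n) → ℝ)
    (x : EuclideanSpace ℝ (Fin n)) : lap n (fun y => -F y) x = -lap n F x := by
  unfold lap
  rw [← Finset.sum_neg_distrib]
  congr 1; ext i
  have h1 : (fun y => fderiv ℝ (fun z => -F z) y (EuclideanSpace.single i 1))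
      = fun y => -(fderiv ℝ F y (EuclideanSpace.single i 1)) := by
    funext y
    rw [fderiv_fun_neg]
    simp
  rw [h1, fderiv_fun_neg]
  simp

theorem lap_combine {n : ℕ} {f g : EuclideanSpace ℝ (Fin n) → ℝ}
    {x : EuclideanSpace ℝ (Fin n)} (hf : ContDiffAt ℝ 2 f x)
    (hg : ContDiffAt ℝ 2 g x) (c : ℝ) :
    lap n (fun y => f y + c * g y) x = lap n f x + c * lap n g x := by
  unfold lap
  rw [Finset.mul_sum, ← Finset.sum_add_distrib]
  congr 1; ext i
  set e : EuclideanSpace ℝ (Fin n) := EuclideanSpace.single i 1 with he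
  have hfd : ∀ᶠ y in 𝓝 x, DifferentiableAt ℝ f y :=
    (hf.eventually (by norm_num)).mono fun y hy => hy.differentiableAt (by norm_num)
  have hgd : ∀ᶠ y in 𝓝 x, DifferentiableAt ℝ g y :=
    (hg.eventually (by norm_num)).mono fun y hy => hy.differentiableAt (by norm_num)
  have h1 : (fun y => fderiv ℝ (fun z => f z + c * g z) y e) =ᶠ[𝓝 x]
      fun y => fderiv ℝ f y e + c * fderiv ℝ g y e := by
    filter_upwards [hfd, hgd] with y hfy hgy
    have : HasFDerivAt (fun z => f z + c * g z)
        (fderiv ℝ f y + c • fderiv ℝ g y) y :=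
      hfy.hasFDerivAt.add (hgy.hasFDerivAt.const_mul c)
    rw [this.fderiv]
    simp
  rw [h1.fderiv_eq]
  have h2 : HasFDerivAt (fun y => fderiv ℝ f y e + c * fderiv ℝ g y e)
      (fderiv ℝ (fun y => fderiv ℝ f y e) x + c • fderiv ℝ (fun y => fderiv ℝ g y e) x) x :=
    (dirDiff hf e).hasFDerivAt.add ((dirDiff hg e).hasFDerivAt.const_mul c)
  rw [h2.fderiv]
  simp

theorem qnorm {n : ℕ} (x : EuclideanSpace ℝ (Fin n)) : ∑ i, x i ^ 2 = ‖x‖ ^ 2 := by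
  have h : 0 ≤ ∑ i, x i ^ 2 := Finset.sum_nonneg fun i _ => sq_nonneg (x i)
  have h2 : ∀ i, ‖x i‖ ^ 2 = x i ^ 2 := fun i => sq_abs (x i)
  rw [EuclideanSpace.norm_eq]
  simp only [h2]
  rw [Real.sq_sqrt h]

theorem maxp {n : ℕ} (hn : 1 ≤ n) {v : EuclideanSpace ℝ (Fin n) → ℝ} {C : ℝ}
    (hc : ContinuousOn v (closedBall 0 1))
    (hv : ∀ x ∈ ball (0 : EuclideanSpace ℝ (Fin n)) 1, ContDiffAt ℝ 2 v x)
    (hsub : ∀ x ∈ ball (0 : EuclideanSpace ℝ (Fin n)) 1, 0 < lap n v x)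
    (hb : ∀ x : EuclideanSpace ℝ (Fin n), ‖x‖ = 1 → v x ≤ C) :
    ∀ x ∈ closedBall (0 : EuclideanSpace ℝ (Fin n)) 1, v x ≤ C := by
  obtain ⟨x₀, hx₀K, hx₀max⟩ := (isCompact_closedBall (0 : EuclideanSpace ℝ (Fin n)) 1).exists_isMaxOn
    ⟨0, by simp⟩ hc
  have hx₀ : ‖x₀‖ ≤ 1 := by simpa [mem_closedBall_zero_iff] using hx₀K
  rcases eq_or_lt_of_le hx₀ with h1 | h1
  · intro x hx
    exact (hx₀max hx).trans (hb x₀ h1)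
  · exfalso
    have hball : x₀ ∈ ball (0 : EuclideanSpace ℝ (Fin n)) 1 := mem_ball_zero_iff.mpr h1
    have hloc : IsLocalMax v x₀ := by
      apply hx₀max.isLocalMax
      exact mem_nhds_iff.mpr ⟨ball 0 1, ball_subset_closedBall, isOpen_ball, hball⟩
    exact absurd (lap_nonpos_of_isLocalMax (hv x₀ hball) hloc) (not_le.mpr (hsub x₀ hball))

theorem harm_le {n : ℕ} (hn : 1 ≤ n) {F : EuclideanSpace ℝ (Fin n) → ℝ} {C : ℝ}
    (hF : ContDiffOn ℝ 2 F (closedBall 0 1))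
    (hh : ∀ x ∈ ball (0 : EuclideanSpace ℝ (Fin n)) 1, lap n F x = 0)
    (hb : ∀ x : EuclideanSpace ℝ (Fin n), ‖x‖ = 1 → F x ≤ C) :
    ∀ x ∈ closedBall (0 : EuclideanSpace ℝ (Fin n)) 1, F x ≤ C := by
  intro x hx
  apply le_of_forall_pos_le_add
  intro ε hε
  have hq : ContDiff ℝ 2 (fun z : EuclideanSpace ℝ (Fin n) => ∑ i, z i ^ 2) := by
    apply ContDiff.sum
    intro i _
    exact ((EuclideanSpace.proj i : EuclideanSpace ℝ (Fin n) →L[ℝ] ℝ).contDiff).pow 2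
  have hFat : ∀ y ∈ ball (0 : EuclideanSpace ℝ (Fin n)) 1, ContDiffAt ℝ 2 F y := by
    intro y hy
    exact hF.contDiffAt (mem_nhds_iff.mpr ⟨ball 0 1, ball_subset_closedBall, isOpen_ball, hy⟩)
  have key : ∀ z ∈ closedBall (0 : EuclideanSpace ℝ (Fin n)) 1,
      F z + ε * ∑ i, z i ^ 2 ≤ C + ε := by
    apply maxp hn
    · exact hF.continuousOn.add (continuous_const.mul hq.continuous).continuousOn
    · intro y hy
      exact (hFat y hy).add ((hq.contDiffAt).const_smul ε)
    · intro y hy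
      rw [lap_combine (hFat y hy) hq.contDiffAt, hh y hy, lap_q]
      have : (1:ℝ) ≤ n := by exact_mod_cast hn
      nlinarith
    · intro y hy
      rw [qnorm, hy]
      simpa using hb y hy
  have := key x hx
  have hq0 : 0 ≤ ∑ i, x i ^ 2 := by positivity
  nlinarith

theorem harm_abs_le {n : ℕ} (hn : 1 ≤ n) {F : EuclideanSpace ℝ (Fin n) → ℝ} {C : ℝ}
    (hF : ContDiffOn ℝ 2 F (closedBall 0 1))
    (hh : ∀ x ∈ ball (0 : EuclideanSpace ℝ (Fin n)) 1, lap n F x = 0)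
    (hb : ∀ x : EuclideanSpace ℝ (Fin n), ‖x‖ = 1 → |F x| ≤ C) :
    ∀ x ∈ closedBall (0 : EuclideanSpace ℝ (Fin n)) 1, |F x| ≤ C := by
  intro x hx
  have h1 := harm_le hn hF hh (fun y hy => (abs_le.mp (hb y hy)).2) x hx
  have h2 := harm_le hn (hF.neg) (fun y hy => by rw [lap_neg, hh y hy, neg_zero])
    (fun y hy => by linarith [(abs_le.mp (hb y hy)).1]) x hx
  rw [abs_le]
  constructor <;> [linarith [h2]; exact h1]

theorem lap_scale {n : ℕ} {φ : EuclideanSpace ℝ (Fin n) → ℝ} (t : ℝ)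
    {x : EuclideanSpace ℝ (Fin n)} (hφ : ContDiffAt ℝ 2 φ (t • x)) :
    lap n (fun y => φ (t • y)) x = t ^ 2 * lap n φ (t • x) := by
  unfold lap
  rw [Finset.mul_sum]
  congr 1; ext i
  set e : EuclideanSpace ℝ (Fin n) := EuclideanSpace.single i 1 with he
  set h : EuclideanSpace ℝ (Fin n) → ℝ := fun z => fderiv ℝ φ z e with hh
  have htc : Tendsto (fun y : EuclideanSpace ℝ (Fin n) => t • y) (𝓝 x) (𝓝 (t • x)) :=
    (continuous_const_smul t).continuousAt
  have hS : ∀ y : EuclideanSpace ℝ (Fin n),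
      HasFDerivAt (fun z : EuclideanSpace ℝ (Fin n) => t • z)
        (t • ContinuousLinearMap.id ℝ (EuclideanSpace ℝ (Fin n))) y := fun y =>
    (ContinuousLinearMap.id ℝ (EuclideanSpace ℝ (Fin n))).hasFDerivAt.const_smul t
  have hdφ : ∀ᶠ z in 𝓝 (t • x), DifferentiableAt ℝ φ z :=
    (hφ.eventually (by norm_num)).mono fun z hz => hz.differentiableAt (by norm_num)
  have h1 : (fun y => fderiv ℝ (fun z => φ (t • z)) y e) =ᶠ[𝓝 x]
      fun y => t * h (t • y) := by
    filter_upwards [htc.eventually hdφ] with y hy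
    have hc : HasFDerivAt (fun z => φ (t • z))
        ((fderiv ℝ φ (t • y)).comp (t • ContinuousLinearMap.id ℝ _)) y :=
      (hy.hasFDerivAt).comp y (hS y)
    rw [hc.fderiv]
    simp [hh, ContinuousLinearMap.comp_apply]
  rw [h1.fderiv_eq]
  have h2 : HasFDerivAt (fun y => t * h (t • y))
      (t • ((fderiv ℝ h (t • x)).comp (t • ContinuousLinearMap.id ℝ _))) x := by
    have hhd : HasFDerivAt h (fderiv ℝ h (t • x)) (t • x) := (dirDiff hφ e).hasFDerivAt
    exact ((hhd.comp x (hS x)).const_mul t)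
  rw [h2.fderiv]
  simp [hh]
  ring

-- (iii) : the rescaled difference is C² and harmonic
theorem Ft_props {n : ℕ} {φ : EuclideanSpace ℝ (Fin n) → ℝ}
    (hC2 : ContDiffOn ℝ 2 φ (closedBall 0 1))
    (hharm : ∀ x ∈ ball (0 : EuclideanSpace ℝ (Fin n)) 1, lap n φ x = 0)
    {t : ℝ} (ht : t ∈ Icc (0:ℝ) 1) :
    ContDiffOn ℝ 2 (fun x => φ (t • x) + (-t) * φ x) (closedBall 0 1) ∧
    ∀ x ∈ ball (0 : EuclideanSpace ℝ (Fin n)) 1,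
      lap n (fun x => φ (t • x) + (-t) * φ x) x = 0 := by
  have hmaps : MapsTo (fun x : EuclideanSpace ℝ (Fin n) => t • x)
      (closedBall 0 1) (closedBall 0 1) := by
    intro x hx
    rw [mem_closedBall_zero_iff] at *
    rw [norm_smul]
    calc ‖t‖ * ‖x‖ ≤ 1 * 1 := by
          apply mul_le_mul _ hx (norm_nonneg x) zero_le_one
          rw [Real.norm_eq_abs, abs_of_nonneg ht.1]; exact ht.2
      _ = 1 := by ring
  have hg1 : ContDiffOn ℝ 2 (fun x : EuclideanSpace ℝ (Fin n) => φ (t • x))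
      (closedBall 0 1) := by
    apply hC2.comp _ hmaps
    exact (contDiff_const_smul t).contDiffOn
  constructor
  · apply hg1.add
    have := hC2.const_smul (-t)
    simpa [smul_eq_mul] using this
  · intro x hx
    have hxc : ContDiffAt ℝ 2 φ x :=
      hC2.contDiffAt (mem_nhds_iff.mpr ⟨ball 0 1, ball_subset_closedBall, isOpen_ball, hx⟩)
    have htx : t • x ∈ ball (0 : EuclideanSpace ℝ (Fin n)) 1 := by
      rw [mem_ball_zero_iff] at *
      rw [norm_smul]
      calc ‖t‖ * ‖x‖ ≤ 1 * ‖x‖ := by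
            apply mul_le_mul_of_nonneg_right _ (norm_nonneg x)
            rw [Real.norm_eq_abs, abs_of_nonneg ht.1]; exact ht.2
        _ = ‖x‖ := by ring
        _ < 1 := hx
    have htxc : ContDiffAt ℝ 2 φ (t • x) :=
      hC2.contDiffAt (mem_nhds_iff.mpr ⟨ball 0 1, ball_subset_closedBall, isOpen_ball, htx⟩)
    have hg1at : ContDiffAt ℝ 2 (fun x : EuclideanSpace ℝ (Fin n) => φ (t • x)) x := by
      exact htxc.comp x (contDiff_const_smul t).contDiffAt
    rw [lap_combine hg1at hxc, lap_scale t htxc, hharm x hx, hharm (t • x) htx]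
    ring

theorem boundary_est {n : ℕ} {φ : EuclideanSpace ℝ (Fin n) → ℝ}
    (hC2 : ContDiffOn ℝ 2 φ (closedBall 0 1))
    (hbc : ∀ x : EuclideanSpace ℝ (Fin n), ‖x‖ = 1 →
      fderivWithin ℝ φ (closedBall 0 1) x x = φ x) :
    ∃ K : ℝ, 0 ≤ K ∧ ∀ t ∈ Icc (0:ℝ) 1, ∀ x : EuclideanSpace ℝ (Fin n), ‖x‖ = 1 →
      |φ (t • x) - t * φ x| ≤ K * (1 - t) ^ 2 := by
  have hu : UniqueDiffOn ℝ (closedBall (0 : EuclideanSpace ℝ (Fin n)) 1) := by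
    apply uniqueDiffOn_convex (convex_closedBall _ _)
    exact ⟨0, mem_interior.mpr ⟨ball 0 1, ball_subset_closedBall, isOpen_ball,
      mem_ball_self one_pos⟩⟩
  set D := fderivWithin ℝ φ (closedBall (0 : EuclideanSpace ℝ (Fin n)) 1) with hD
  have hDc : ContDiffOn ℝ 1 D (closedBall 0 1) := hC2.fderivWithin hu (by norm_num)
  set H := fderivWithin ℝ D (closedBall (0 : EuclideanSpace ℝ (Fin n)) 1) with hH
  have hHcont : ContinuousOn H (closedBall 0 1) :=
    hDc.continuousOn_fderivWithin hu (le_refl 1)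
  obtain ⟨K0, hK0⟩ := (isCompact_closedBall (0 : EuclideanSpace ℝ (Fin n)) 1).exists_bound_of_continuousOn (f := H) hHcont
  refine ⟨max K0 0, le_max_right _ _, ?_⟩
  set K := max K0 0 with hK
  intro t ht x hx
  set c : ℝ → EuclideanSpace ℝ (Fin n) := fun s => (1 - s) • x with hc
  set ψ : ℝ → ℝ := fun s => φ (c s) - (1 - s) * φ x with hψ
  set ψ' : ℝ → ℝ := fun s => φ x - D (c s) x with hψ'
  set ψ'' : ℝ → ℝ := fun s => H (c s) x x with hψ''
  have hcmem : ∀ s ∈ Icc (0:ℝ) 1, c s ∈ closedBall (0 : EuclideanSpace ℝ (Fin n)) 1 := by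
    intro s hs
    rw [mem_closedBall_zero_iff, hc, norm_smul, hx, mul_one, Real.norm_eq_abs,
      abs_of_nonneg (by linarith [hs.2])]
    linarith [hs.1]
  have hcd : ∀ s : ℝ, HasDerivAt c (-x) s := by
    intro s
    have := (((hasDerivAt_id s).const_sub 1)).smul_const x
    simpa [hc] using this
  -- Step 1
  have hψd : ∀ s ∈ Icc (0:ℝ) 1, HasDerivWithinAt ψ (ψ' s) (Icc 0 1) s := by
    intro s hs
    have hφd : HasFDerivWithinAt φ (D (c s)) (closedBall 0 1) (c s) :=
      ((hC2.differentiableOn (by norm_num)) (c s) (hcmem s hs)).hasFDerivWithinAt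
    have h1 : HasDerivWithinAt (fun s => φ (c s)) (D (c s) (-x)) (Icc 0 1) s :=
      hφd.comp_hasDerivWithinAt s ((hcd s).hasDerivWithinAt) hcmem
    have h2 : HasDerivWithinAt (fun s : ℝ => (1 - s) * φ x) (-φ x) (Icc 0 1) s := by
      have := ((((hasDerivAt_id s).const_sub 1)).mul_const (φ x)).hasDerivWithinAt (s := Icc 0 1)
      simpa using this
    have := h1.sub h2
    have heq : D (c s) (-x) - -φ x = ψ' s := by
      rw [map_neg]; simp [hψ']; ring
    rw [heq] at this
    exact this
  -- Step 2
  have hψ'd : ∀ s ∈ Icc (0:ℝ) 1, HasDerivWithinAt ψ' (ψ'' s) (Icc 0 1) s := by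
    intro s hs
    have hDd : HasFDerivWithinAt D (H (c s)) (closedBall 0 1) (c s) :=
      ((hDc.differentiableOn one_ne_zero) (c s) (hcmem s hs)).hasFDerivWithinAt
    have h1 : HasDerivWithinAt (fun s => D (c s)) (H (c s) (-x)) (Icc 0 1) s :=
      hDd.comp_hasDerivWithinAt s ((hcd s).hasDerivWithinAt) hcmem
    have h2 : HasDerivWithinAt (fun s => D (c s) x)
        ((H (c s) (-x)) x) (Icc 0 1) s := by
      have := h1.clm_apply (hasDerivWithinAt_const s (Icc (0:ℝ) 1) x)
      simpa using this
    have h3 := (hasDerivWithinAt_const s (Icc (0:ℝ) 1) (φ x)).sub h2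
    have heq : (0 : ℝ) - (H (c s) (-x)) x = ψ'' s := by
      rw [map_neg, ContinuousLinearMap.neg_apply]
      simp [hψ'']
    rw [heq] at h3
    exact h3
  -- bound on second derivative
  have hbnd : ∀ s ∈ Icc (0:ℝ) 1, |ψ'' s| ≤ K := by
    intro s hs
    have h1 : ‖H (c s) x x‖ ≤ ‖H (c s) x‖ * ‖x‖ := (H (c s) x).le_opNorm x
    have h2 : ‖H (c s) x‖ ≤ ‖H (c s)‖ * ‖x‖ := (H (c s)).le_opNorm x
    have h3 := hK0 (c s) (hcmem s hs)
    rw [hx] at h1 h2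
    calc |ψ'' s| = ‖H (c s) x x‖ := rfl
      _ ≤ ‖H (c s)‖ := by rw [mul_one] at h1 h2; exact h1.trans h2
      _ ≤ K0 := h3
      _ ≤ K := le_max_left _ _
  -- ψ' 0 = 0
  have hc0 : c 0 = x := by simp [hc]
  have hψ'0 : ψ' 0 = 0 := by
    rw [hψ']
    simp only [hc0, hbc x hx, sub_self]
  -- Step 3 : |ψ' s| ≤ K * s
  have hstep3 : ∀ s ∈ Icc (0:ℝ) 1, |ψ' s| ≤ K * s := by
    intro s hs
    have := norm_image_sub_le_of_norm_deriv_le_segment' hψ'd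
      (fun u hu' => (hbnd u (Ico_subset_Icc_self hu'))) s hs
    rw [hψ'0, sub_zero] at this
    simpa using this
  -- Step 4
  have hstep4 : ∀ s ∈ Icc (0:ℝ) 1, |ψ s| ≤ K * s ^ 2 := by
    intro s₀ hs₀
    have hsub : Icc (0:ℝ) s₀ ⊆ Icc (0:ℝ) 1 := Icc_subset_Icc_right hs₀.2
    have hd : ∀ s ∈ Icc (0:ℝ) s₀, HasDerivWithinAt ψ (ψ' s) (Icc 0 s₀) s :=
      fun s hs => (hψd s (hsub hs)).mono hsub
    have hb : ∀ s ∈ Ico (0:ℝ) s₀, ‖ψ' s‖ ≤ K * s₀ := by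
      intro s hs
      have h1 := hstep3 s (hsub (Ico_subset_Icc_self hs))
      have : K * s ≤ K * s₀ :=
        mul_le_mul_of_nonneg_left (le_of_lt hs.2) (le_max_right _ _)
      calc ‖ψ' s‖ = |ψ' s| := rfl
        _ ≤ K * s := h1
        _ ≤ K * s₀ := this
    have := norm_image_sub_le_of_norm_deriv_le_segment' hd hb s₀
      (right_mem_Icc.mpr hs₀.1)
    have hψ0 : ψ 0 = 0 := by simp [hψ, hc0]
    rw [hψ0, sub_zero] at this
    calc |ψ s₀| = ‖ψ s₀‖ := rfl
      _ ≤ K * s₀ * (s₀ - 0) := this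
      _ = K * s₀ ^ 2 := by ring
  -- conclusion
  have h1t : (1:ℝ) - t ∈ Icc (0:ℝ) 1 := ⟨by linarith [ht.2], by linarith [ht.1]⟩
  have := hstep4 (1 - t) h1t
  have hceq : c (1 - t) = t • x := by rw [hc]; norm_num
  have h5 : ψ (1 - t) = φ (t • x) - t * φ x := by
    show φ (c (1 - t)) - (1 - (1 - t)) * φ x = _
    rw [hceq]; ring
  rw [h5] at this
  exact this

theorem homog {n : ℕ} (hn : 1 ≤ n) {φ : EuclideanSpace ℝ (Fin n) → ℝ}
    (hC2 : ContDiffOn ℝ 2 φ (closedBall 0 1))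
    (hharm : ∀ x ∈ ball (0 : EuclideanSpace ℝ (Fin n)) 1, lap n φ x = 0)
    (hbc : ∀ x : EuclideanSpace ℝ (Fin n), ‖x‖ = 1 →
      fderivWithin ℝ φ (closedBall 0 1) x x = φ x) :
    ∀ t ∈ Ioc (0:ℝ) 1, ∀ x ∈ closedBall (0 : EuclideanSpace ℝ (Fin n)) 1,
      φ (t • x) = t * φ x := by
  obtain ⟨K, hK0, hKb⟩ := boundary_est hC2 hbc
  -- global estimate on the whole ball via the maximum principle
  have glob : ∀ t ∈ Icc (0:ℝ) 1, ∀ x ∈ closedBall (0 : EuclideanSpace ℝ (Fin n)) 1,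
      |φ (t • x) - t * φ x| ≤ K * (1 - t) ^ 2 := by
    intro t ht x hx
    obtain ⟨hF, hl⟩ := Ft_props hC2 hharm ht
    have := harm_abs_le hn hF hl (C := K * (1 - t) ^ 2) (fun y hy => by
      have := hKb t ht y hy
      calc |φ (t • y) + (-t) * φ y| = |φ (t • y) - t * φ y| := by ring_nf
        _ ≤ K * (1 - t) ^ 2 := this) x hx
    calc |φ (t • x) - t * φ x| = |φ (t • x) + (-t) * φ x| := by ring_nf
      _ ≤ K * (1 - t) ^ 2 := this
  -- iterated estimate
  have iter : ∀ k : ℕ, ∀ t ∈ Ioc (0:ℝ) 1,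
      ∀ x ∈ closedBall (0 : EuclideanSpace ℝ (Fin n)) 1,
      |φ (t • x) - t * φ x| ≤ 2 ^ k * (K * (1 - t ^ ((1:ℝ)/2 ^ k)) ^ 2) := by
    intro k
    induction k with
    | zero =>
      intro t ht x hx
      simpa [Real.rpow_one] using glob t ⟨ht.1.le, ht.2⟩ x hx
    | succ k ih =>
      intro t ht x hx
      set s := Real.sqrt t with hs
      have hs01 : s ∈ Ioc (0:ℝ) 1 :=
        ⟨Real.sqrt_pos.mpr ht.1, Real.sqrt_le_one.mpr ht.2⟩
      have hsx : s • x ∈ closedBall (0 : EuclideanSpace ℝ (Fin n)) 1 := by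
        rw [mem_closedBall_zero_iff] at *
        rw [norm_smul, Real.norm_eq_abs, abs_of_nonneg hs01.1.le]
        calc s * ‖x‖ ≤ 1 * 1 := mul_le_mul hs01.2 hx (norm_nonneg x) zero_le_one
          _ = 1 := by ring
      have hA := ih s hs01 (s • x) hsx
      have hB := ih s hs01 x hx
      have hts : t = s * s := (Real.mul_self_sqrt ht.1.le).symm
      have hkey : φ (t • x) - t * φ x =
          (φ (s • s • x) - s * φ (s • x)) + s * (φ (s • x) - s * φ x) := by
        rw [hts, smul_smul]; ring
      set Ek := 2 ^ k * (K * (1 - s ^ ((1:ℝ)/2 ^ k)) ^ 2) with hEk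
      have hEk0 : 0 ≤ Ek := by positivity
      have h2E : |φ (t • x) - t * φ x| ≤ 2 * Ek := by
        rw [hkey]
        calc |(φ (s • s • x) - s * φ (s • x)) + s * (φ (s • x) - s * φ x)|
            ≤ |φ (s • s • x) - s * φ (s • x)| + |s * (φ (s • x) - s * φ x)| := abs_add_le _ _
          _ = |φ (s • s • x) - s * φ (s • x)| + s * |φ (s • x) - s * φ x| := by
              rw [abs_mul, abs_of_nonneg hs01.1.le]
          _ ≤ Ek + 1 * Ek := by
              apply add_le_add hA
              apply mul_le_mul hs01.2 hB (abs_nonneg _) zero_le_one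
          _ = 2 * Ek := by ring
      have hsp : s ^ ((1:ℝ)/2 ^ k) = t ^ ((1:ℝ)/2 ^ (k+1)) := by
        rw [hs, Real.sqrt_eq_rpow, ← Real.rpow_mul ht.1.le]
        congr 1
        rw [pow_succ]
        field_simp
      calc |φ (t • x) - t * φ x| ≤ 2 * Ek := h2E
        _ = 2 ^ (k+1) * (K * (1 - t ^ ((1:ℝ)/2 ^ (k+1))) ^ 2) := by
            rw [hEk, hsp]; ring
  -- pass to the limit
  intro t ht x hx
  set L := -Real.log t with hL
  have hL0 : 0 ≤ L := by
    rw [hL]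
    simp only [neg_nonneg]
    exact Real.log_nonpos ht.1.le ht.2
  have hbd : ∀ k : ℕ, |φ (t • x) - t * φ x| ≤ K * L ^ 2 * (1/2 : ℝ) ^ k := by
    intro k
    have h1 : 1 - t ^ ((1:ℝ)/2 ^ k) ≤ L / 2 ^ k := by
      have hrw : t ^ ((1:ℝ)/2 ^ k) = Real.exp (Real.log t * ((1:ℝ)/2 ^ k)) :=
        Real.rpow_def_of_pos ht.1 _
      have hadd := Real.add_one_le_exp (Real.log t * ((1:ℝ)/2 ^ k))
      rw [hrw, hL]
      calc 1 - Real.exp (Real.log t * ((1:ℝ)/2 ^ k))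
          ≤ -(Real.log t * ((1:ℝ)/2 ^ k)) := by linarith
        _ = -Real.log t / 2 ^ k := by ring
    have h0 : 0 ≤ 1 - t ^ ((1:ℝ)/2 ^ k) := by
      have := Real.rpow_le_one ht.1.le ht.2 (by positivity : (0:ℝ) ≤ (1:ℝ)/2 ^ k)
      linarith
    have hsq : (1 - t ^ ((1:ℝ)/2 ^ k)) ^ 2 ≤ (L / 2 ^ k) ^ 2 :=
      pow_le_pow_left₀ h0 h1 2
    have := iter k t ht x hx
    have h2k : (0:ℝ) < 2 ^ k := by positivity
    calc |φ (t • x) - t * φ x| ≤ 2 ^ k * (K * (1 - t ^ ((1:ℝ)/2 ^ k)) ^ 2) := this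
      _ ≤ 2 ^ k * (K * (L / 2 ^ k) ^ 2) := by
          apply mul_le_mul_of_nonneg_left _ (le_of_lt h2k)
          exact mul_le_mul_of_nonneg_left hsq hK0
      _ = K * L ^ 2 * (1/2 : ℝ) ^ k := by
          field_simp
          have h2 : (2:ℝ) ^ k * (1/2) ^ k = 1 := by rw [← mul_pow]; norm_num
          linear_combination (-(K * L ^ 2)) * h2
  have htend : Tendsto (fun k : ℕ => K * L ^ 2 * (1/2 : ℝ) ^ k) atTop (𝓝 0) := by
    have h1 : Tendsto (fun k : ℕ => (1/2 : ℝ) ^ k) atTop (𝓝 0) :=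
      tendsto_pow_atTop_nhds_zero_of_lt_one (by norm_num) (by norm_num)
    simpa using h1.const_mul (K * L ^ 2)
  have habs : |φ (t • x) - t * φ x| ≤ 0 := ge_of_tendsto' htend hbd
  have := abs_nonneg (φ (t • x) - t * φ x)
  have : |φ (t • x) - t * φ x| = 0 := le_antisymm habs this
  linarith [abs_eq_zero.mp this, sub_eq_zero.mp (abs_eq_zero.mp this)]

/-- The null eigenspace of the critical-Robin Laplacian on `B^n` consists of the
linear functions. -/
theorem stmt12 (n : ℕ) (hn : 1 ≤ n) (φ : EuclideanSpace ℝ (Fin n) → ℝ)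
    (hC2 : ContDiffOn ℝ 2 φ (closedBall 0 1))
    (hharm : ∀ x ∈ ball (0 : EuclideanSpace ℝ (Fin n)) 1, lap n φ x = 0)
    (hbc : ∀ x : EuclideanSpace ℝ (Fin n), ‖x‖ = 1 →
      fderivWithin ℝ φ (closedBall 0 1) x x = φ x) :
    ∃ a : EuclideanSpace ℝ (Fin n),
      ∀ x ∈ closedBall (0 : EuclideanSpace ℝ (Fin n)) 1, φ x = ⟪a, x⟫ := by
  have hhom := homog hn hC2 hharm hbc
  -- φ 0 = 0
  have hφ0 : φ 0 = 0 := by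
    have h0 : (0 : EuclideanSpace ℝ (Fin n)) ∈ closedBall (0 : EuclideanSpace ℝ (Fin n)) 1 :=
      mem_closedBall_self zero_le_one
    have := hhom (1/2) ⟨by norm_num, by norm_num⟩ 0 h0
    rw [smul_zero] at this
    linarith
  -- derivative at 0
  have hdiff : DifferentiableAt ℝ φ 0 := by
    have := hC2.contDiffAt (mem_nhds_iff.mpr ⟨ball 0 1, ball_subset_closedBall, isOpen_ball,
      mem_ball_self one_pos⟩)
    exact this.differentiableAt (by norm_num)
  set f' := fderiv ℝ φ 0 with hf'
  refine ⟨(InnerProductSpace.toDual ℝ (EuclideanSpace ℝ (Fin n))).symm f', ?_⟩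
  intro x hx
  rw [InnerProductSpace.toDual_symm_apply]
  -- the 1D function t ↦ φ (t • x)
  set g : ℝ → ℝ := fun t => φ (t • x) with hg
  have h1 : HasDerivAt g (f' x) 0 := by
    have hsm : HasDerivAt (fun t : ℝ => t • x) ((1:ℝ) • x) 0 := (hasDerivAt_id 0).smul_const x
    have hφd : HasFDerivAt φ f' ((fun t : ℝ => t • x) 0) := by
      simp only [zero_smul]
      exact hdiff.hasFDerivAt
    have := hφd.comp_hasDerivAt 0 hsm
    simpa [hg, Function.comp_def] using this
  have h2 : HasDerivWithinAt g (φ x) (Icc 0 1) 0 := by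
    have hlin : HasDerivWithinAt (fun t : ℝ => t * φ x) (φ x) (Icc 0 1) 0 := by
      simpa using ((hasDerivAt_id (0:ℝ)).mul_const (φ x)).hasDerivWithinAt (s := Icc 0 1)
    apply hlin.congr
    · intro t ht
      rcases eq_or_lt_of_le ht.1 with h | h
      · rw [← h]; simp [hg, hφ0]
      · exact hhom t ⟨h, ht.2⟩ x hx
    · simp [hg, hφ0]
  have hud : UniqueDiffWithinAt ℝ (Icc (0:ℝ) 1) 0 :=
    uniqueDiffOn_Icc zero_lt_one 0 (left_mem_Icc.mpr zero_le_one)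
  have hd2 := h2.derivWithin hud
  have hd1 := (h1.hasDerivWithinAt (s := Icc 0 1)).derivWithin hud
  exact (hd1.symm.trans hd2).symm
end
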